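/- arXiv:1612.06103 — 3 statements merged into one kernel-verified Lean document; each statement's English description precedes it below -/
import Mathlib

section
/- Let n_1, n_2 be nonnegative integers, λ1 a special symplectic partition of 2n_1 and λ2 a special orthogonal partition of 2n_2. Then the sequence λ1 + λ2 + ξ is nonincreasing and is a symplectic partition of 2(n_1+n_2). -/
open Classical

namespace Wald

/-- `S f k = λ_1 + … + λ_k` (partitions are indexed from 1; index 0 is unused). -/
def S (f : ℕ → ℕ) (k : ℕ) : ℕ := ∑ j ∈ Finset.Icc 1 k, f j

/-- `f` represents a partition of `N`: nonincreasing on indices `≥ 1`,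
finitely many nonzero terms, with total sum `N`. -/
structure IsPartition (f : ℕ → ℕ) (N : ℕ) : Prop where
  mono : ∀ ⦃j k : ℕ⦄, 1 ≤ j → j ≤ k → f k ≤ f j
  fin : ∃ m, ∀ j, m < j → f j = 0
  total : ∀ m, (∀ j, m < j → f j = 0) → S f m = N

/-- multiplicity of `i` as a term of the partition -/
noncomputable def mult (f : ℕ → ℕ) (i : ℕ) : ℕ := Set.ncard {j : ℕ | 1 ≤ j ∧ f j = i}

/-- dominance order: `Dom f g ↔ f ≤ g` -/
def Dom (f g : ℕ → ℕ) : Prop := ∀ k, S f k ≤ S g k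

/-- transposed partition: `(transpose f) j = #{i ≥ 1 : f i ≥ j}` for `j ≥ 1` -/
noncomputable def transpose (f : ℕ → ℕ) : ℕ → ℕ :=
  fun j => Set.ncard {i : ℕ | 1 ≤ i ∧ 1 ≤ j ∧ j ≤ f i}

/-- union of two partitions (all terms listed together in nonincreasing order);
it is characterized by `transpose (unionP f g) = transpose f + transpose g`. -/
noncomputable def unionP (f g : ℕ → ℕ) : ℕ → ℕ :=
  transpose (fun j => transpose f j + transpose g j)

/-- the partition `(1)` -/
def one1 : ℕ → ℕ := fun j => if j = 1 then 1 else 0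

/-- symplectic partition: every odd `i ≥ 1` has even multiplicity -/
def Symp (f : ℕ → ℕ) : Prop := ∀ i, Odd i → Even (mult f i)

/-- orthogonal partition: every even `i ≥ 2` has even multiplicity -/
def Orth (f : ℕ → ℕ) : Prop := ∀ i, Even i → 1 ≤ i → Even (mult f i)

/-- `λ_{2j-1} ≡ λ_{2j} (mod 2)` for all `j ≥ 1` (speciality for symplectic
partitions of `2n` and orthogonal partitions of `2n`). -/
def SpecialPairs (f : ℕ → ℕ) : Prop := ∀ j, 1 ≤ j → f (2*j - 1) % 2 = f (2*j) % 2

/-- speciality for orthogonal partitions of `2n+1`: `λ_1` odd and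
`λ_{2j} ≡ λ_{2j+1} (mod 2)` for all `j ≥ 1`. -/
def SpecialOrthOdd (f : ℕ → ℕ) : Prop :=
  Odd (f 1) ∧ ∀ j, 1 ≤ j → f (2*j) % 2 = f (2*j + 1) % 2

/-- `Jord_bp` for symplectic partitions: even `i ≥ 2` with positive multiplicity -/
def JordbpS (f : ℕ → ℕ) : Set ℕ := {i | Even i ∧ 2 ≤ i ∧ 1 ≤ mult f i}

/-- `Jord_bp` for orthogonal partitions: odd `i ≥ 1` with positive multiplicity -/
def JordbpO (f : ℕ → ℕ) : Set ℕ := {i | Odd i ∧ 1 ≤ mult f i}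

/-- the set `{i_1 > … > i_m}` of terms with odd multiplicity -/
def OddSet (f : ℕ → ℕ) : Set ℕ := {i | Odd (mult f i)}

/-- for special symplectic partitions: `{i_1 > … > i_{m'}}`, with `0` added if `m` is odd -/
def Dsymp (f : ℕ → ℕ) : Set ℕ :=
  {i | Odd (mult f i) ∨ (i = 0 ∧ Odd (OddSet f).ncard)}

/-- `a = i_{2h-1}` and `b = i_{2h}` for some `h`: consecutive elements of `Dsymp f`
with an even number of elements of `Dsymp f` above `a`. -/
def PairedS (f : ℕ → ℕ) (a b : ℕ) : Prop :=
  b < a ∧ a ∈ Dsymp f ∧ b ∈ Dsymp f ∧ Even ((Dsymp f ∩ Set.Ioi a).ncard) ∧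
    Dsymp f ∩ Set.Ioo b a = ∅

/-- intervals of a special symplectic partition of `2n` -/
def IsIntervalS (f : ℕ → ℕ) (Δ : Set ℕ) : Prop :=
  (∃ a b, PairedS f a b ∧ Δ = {i | (i = 0 ∨ 1 ≤ mult f i) ∧ b ≤ i ∧ i ≤ a}) ∨
  (∃ i, Even i ∧ (i = 0 ∨ (2 ≤ i ∧ 1 ≤ mult f i)) ∧
    (¬ ∃ a b, PairedS f a b ∧ b ≤ i ∧ i ≤ a) ∧ Δ = {i})

/-- `a = i_{2h-1}` and `b = i_{2h}` for some `h` (orthogonal partitions of `2n`) -/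
def PairedOE (f : ℕ → ℕ) (a b : ℕ) : Prop :=
  b < a ∧ a ∈ OddSet f ∧ b ∈ OddSet f ∧ Even ((OddSet f ∩ Set.Ioi a).ncard) ∧
    OddSet f ∩ Set.Ioo b a = ∅

/-- intervals of a special orthogonal partition of `2n` -/
def IsIntervalOE (f : ℕ → ℕ) (Δ : Set ℕ) : Prop :=
  (∃ a b, PairedOE f a b ∧ Δ = {i | 1 ≤ mult f i ∧ b ≤ i ∧ i ≤ a}) ∨
  (∃ i, Odd i ∧ 1 ≤ mult f i ∧ (¬ ∃ a b, PairedOE f a b ∧ b ≤ i ∧ i ≤ a) ∧ Δ = {i})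

/-- `a = i_{2h}` and `b = i_{2h+1}` for some `h ≥ 1` (orthogonal partitions of `2n+1`) -/
def PairedOO (f : ℕ → ℕ) (a b : ℕ) : Prop :=
  b < a ∧ a ∈ OddSet f ∧ b ∈ OddSet f ∧ Odd ((OddSet f ∩ Set.Ioi a).ncard) ∧
    OddSet f ∩ Set.Ioo b a = ∅

/-- intervals of a special orthogonal partition of `2n+1` (convention `i_0 = ∞`) -/
def IsIntervalOO (f : ℕ → ℕ) (Δ : Set ℕ) : Prop :=
  (∃ b, b ∈ OddSet f ∧ OddSet f ∩ Set.Ioi b = ∅ ∧ Δ = {i | 1 ≤ mult f i ∧ b ≤ i}) ∨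
  (∃ a b, PairedOO f a b ∧ Δ = {i | 1 ≤ mult f i ∧ b ≤ i ∧ i ≤ a}) ∨
  (∃ i, Odd i ∧ 1 ≤ mult f i ∧
    (¬ ((∃ b, b ∈ OddSet f ∧ OddSet f ∩ Set.Ioi b = ∅ ∧ b ≤ i) ∨
        (∃ a b, PairedOO f a b ∧ b ≤ i ∧ i ≤ a))) ∧ Δ = {i})

/-- `J(Δ) = {j ≥ 1 : λ_j ∈ Δ}` -/
def Jset (f : ℕ → ℕ) (Δ : Set ℕ) : Set ℕ := {j | 1 ≤ j ∧ f j ∈ Δ}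

/-- `ζ(λ)` for a special symplectic partition (`j_max(Δ_min) = ∞`, so the smallest
interval contributes no `-1`: its `J`-set has no greatest element). -/
noncomputable def zetaS (f : ℕ → ℕ) : ℕ → ℤ := fun j =>
  if ∃ Δ, IsIntervalS f Δ ∧ IsLeast (Jset f Δ) j then 1
  else if ∃ Δ, IsIntervalS f Δ ∧ IsGreatest (Jset f Δ) j then -1
  else 0

/-- `ζ(λ)` for a special orthogonal partition of `2n` -/
noncomputable def zetaOE (f : ℕ → ℕ) : ℕ → ℤ := fun j =>
  if ∃ Δ, IsIntervalOE f Δ ∧ IsLeast (Jset f Δ) j then 1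
  else if ∃ Δ, IsIntervalOE f Δ ∧ IsGreatest (Jset f Δ) j then -1
  else 0

/-- `J^+` for `λ1` special symplectic and `λ2` special orthogonal (of `2n2`) -/
def JplusSet (f1 f2 : ℕ → ℕ) : Set ℕ :=
  {j | 1 ≤ j ∧ Even (f1 j) ∧ Odd (f2 j) ∧
    ((∃ Δ, IsIntervalS f1 Δ ∧ IsLeast (Jset f1 Δ) j) ∨
     (∃ Δ, IsIntervalOE f2 Δ ∧ IsLeast (Jset f2 Δ) j))}

/-- `J^-` -/
def JminusSet (f1 f2 : ℕ → ℕ) : Set ℕ :=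
  {j | 1 ≤ j ∧ Even (f1 j) ∧ Odd (f2 j) ∧
    ((∃ Δ, IsIntervalS f1 Δ ∧ IsGreatest (Jset f1 Δ) j) ∨
     (∃ Δ, IsIntervalOE f2 Δ ∧ IsGreatest (Jset f2 Δ) j))}

/-- the sequence `ξ` -/
noncomputable def xi (f1 f2 : ℕ → ℕ) : ℕ → ℤ := fun j =>
  if j ∈ JplusSet f1 f2 then 1 else if j ∈ JminusSet f1 f2 then -1 else 0

/-- partial sums of an integer-valued sequence indexed from 1 -/
def Sz (f : ℕ → ℤ) (k : ℕ) : ℤ := ∑ j ∈ Finset.Icc 1 k, f j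

/-- `g` is the greatest orthogonal partition of `N` which is dominated by the
sequence `t` (used to define the Spaltenstein-type duality `d`). -/
def IsDualOf (g : ℕ → ℕ) (N : ℕ) (t : ℕ → ℕ) : Prop :=
  (IsPartition g N ∧ Orth g ∧ Dom g t) ∧
  ∀ ν, IsPartition ν N → Orth ν → Dom ν t → Dom ν g

/-- `g = d(f)` for `f` a symplectic partition of `2m`: the greatest orthogonal
partition of `2m+1` dominated by `^t(f ∪ (1))`. -/
def IsSympDual (g : ℕ → ℕ) (m : ℕ) (f : ℕ → ℕ) : Prop :=
  IsDualOf g (2*m+1) (transpose (unionP f one1))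

/-- `g = d(f)` for `f` an orthogonal partition of `2m`: the greatest orthogonal
partition of `2m` dominated by `^tf`. -/
def IsOrthDual (g : ℕ → ℕ) (m : ℕ) (f : ℕ → ℕ) : Prop :=
  IsDualOf g (2*m) (transpose f)

section Count
variable {f : ℕ → ℕ} {M : ℕ}

lemma mult_zero (hM : ∀ j, M < j → f j = 0) : mult f 0 = 0 := by
  have h : {j : ℕ | 1 ≤ j ∧ f j = 0}.Infinite := by
    refine (Set.Ici_infinite (M+1)).mono ?_
    intro j hj
    simp only [Set.mem_Ici] at hj
    exact ⟨by omega, hM j (by omega)⟩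
  simpa [mult] using h.ncard

lemma mult_eq_card (hM : ∀ j, M < j → f j = 0) {i : ℕ} (hi : 1 ≤ i) :
    mult f i = ((Finset.Icc 1 M).filter (fun j => f j = i)).card := by
  rw [mult, ← Set.ncard_coe_finset]
  congr 1
  ext j
  simp only [Set.mem_setOf_eq, Finset.mem_coe, Finset.mem_filter, Finset.mem_Icc]
  constructor
  · rintro ⟨h1, h2⟩
    refine ⟨⟨h1, ?_⟩, h2⟩
    by_contra hc
    have := hM j (by omega)
    omega
  · rintro ⟨⟨h1, _⟩, h2⟩; exact ⟨h1, h2⟩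

lemma one_le_mult (hM : ∀ j, M < j → f j = 0) {j : ℕ} (hj : 1 ≤ j) (h : 1 ≤ f j) :
    1 ≤ mult f (f j) := by
  rw [mult_eq_card hM h]
  refine Finset.card_pos.mpr ⟨j, Finset.mem_filter.mpr ⟨Finset.mem_Icc.mpr ⟨hj, ?_⟩, rfl⟩⟩
  by_contra hc
  have := hM j (by omega); omega

lemma exists_of_mult (hM : ∀ j, M < j → f j = 0) {i : ℕ} (hi : 1 ≤ i) (h : 1 ≤ mult f i) :
    ∃ j, 1 ≤ j ∧ j ≤ M ∧ f j = i := by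
  rw [mult_eq_card hM hi] at h
  obtain ⟨j, hj⟩ := Finset.card_pos.mp h
  simp only [Finset.mem_filter, Finset.mem_Icc] at hj
  exact ⟨j, hj.1.1, hj.1.2, hj.2⟩

end Count

lemma card_tri (s : Finset ℕ) {a : ℕ} (ha : a ∈ s) :
    s.card = (s.filter (fun x => x < a)).card + 1 + (s.filter (fun x => a < x)).card := by
  classical
  have h1 := Finset.card_filter_add_card_filter_not (s := s) (p := fun x => x < a)
  have h2 := Finset.card_filter_add_card_filter_not
    (s := s.filter (fun x => ¬ x < a)) (p := fun x => a < x)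
  have h3 : (s.filter (fun x => ¬ x < a)).filter (fun x => a < x)
      = s.filter (fun x => a < x) := by
    rw [Finset.filter_filter]
    apply Finset.filter_congr
    intro x _
    constructor
    · rintro ⟨_, h⟩; exact h
    · intro h; exact ⟨by omega, h⟩
  have h4 : (s.filter (fun x => ¬ x < a)).filter (fun x => ¬ a < x) = {a} := by
    rw [Finset.filter_filter]
    ext x
    simp only [Finset.mem_filter, Finset.mem_singleton]
    constructor
    · rintro ⟨_, h, h'⟩; omega
    · rintro rfl; exact ⟨ha, by omega, by omega⟩
  rw [h3, h4] at h2
  simp only [Finset.card_singleton] at h2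
  omega

lemma ncard_split {S : Set ℕ} (hS : S.Finite) {a : ℕ} (ha : a ∈ S) :
    S.ncard = (S ∩ Set.Iio a).ncard + 1 + (S ∩ Set.Ioi a).ncard := by
  classical
  have e1 : S = ↑hS.toFinset := by simp
  have e2 : S ∩ Set.Iio a = ↑(hS.toFinset.filter (fun x => x < a)) := by
    ext x; simp [Set.mem_Iio]
  have e3 : S ∩ Set.Ioi a = ↑(hS.toFinset.filter (fun x => a < x)) := by
    ext x
    simp only [Set.mem_inter_iff, Set.mem_Ioi, Finset.coe_filter, Set.mem_setOf_eq,
      Set.Finite.mem_toFinset]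
  rw [e2, e3, Set.ncard_coe_finset, Set.ncard_coe_finset]
  rw [Set.ncard_eq_toFinset_card S hS]
  exact card_tri _ (by simpa using ha)

lemma ncard_Ioi_split {S : Set ℕ} (hS : S.Finite) {w a : ℕ} (hwa : w < a) (ha : a ∈ S) :
    (S ∩ Set.Ioi w).ncard
      = (S ∩ Set.Ioo w a).ncard + 1 + (S ∩ Set.Ioi a).ncard := by
  have h := ncard_split (hS.inter_of_left (Set.Ioi w)) (a := a) ⟨ha, hwa⟩
  have e1 : S ∩ Set.Ioi w ∩ Set.Iio a = S ∩ Set.Ioo w a := by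
    ext x; simp only [Set.mem_inter_iff, Set.mem_Ioi, Set.mem_Iio, Set.mem_Ioo]; tauto
  have e2 : S ∩ Set.Ioi w ∩ Set.Ioi a = S ∩ Set.Ioi a := by
    ext x; simp only [Set.mem_inter_iff, Set.mem_Ioi]
    constructor
    · rintro ⟨⟨h1, _⟩, h2⟩; exact ⟨h1, h2⟩
    · rintro ⟨h1, h2⟩; exact ⟨⟨h1, by omega⟩, h2⟩
  rw [e1, e2] at h
  exact h

lemma ncard_Ici {S : Set ℕ} (hS : S.Finite) {b : ℕ} (hb : b ∈ S) :
    (S ∩ Set.Ici b).ncard = (S ∩ Set.Ioi b).ncard + 1 := by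
  have h := ncard_split (hS.inter_of_left (Set.Ici b)) (a := b)
    ⟨hb, Set.mem_Ici.mpr le_rfl⟩
  have e1 : S ∩ Set.Ici b ∩ Set.Iio b = ∅ := by
    ext x
    simp only [Set.mem_inter_iff, Set.mem_Ici, Set.mem_Iio, Set.mem_empty_iff_false, iff_false]
    rintro ⟨⟨_, h1⟩, h2⟩; omega
  have e2 : S ∩ Set.Ici b ∩ Set.Ioi b = S ∩ Set.Ioi b := by
    ext x; simp only [Set.mem_inter_iff, Set.mem_Ici, Set.mem_Ioi]
    constructor
    · rintro ⟨⟨h1, _⟩, h2⟩; exact ⟨h1, h2⟩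
    · rintro ⟨h1, h2⟩; exact ⟨⟨h1, by omega⟩, h2⟩
  rw [e1, e2] at h
  simp only [Set.ncard_empty] at h
  omega


def PairedG (S : Set ℕ) (a b : ℕ) : Prop :=
  b < a ∧ a ∈ S ∧ b ∈ S ∧ Even ((S ∩ Set.Ioi a).ncard) ∧ S ∩ Set.Ioo b a = ∅


section PairedG
variable {S : Set ℕ} (hfin : S.Finite) (heven : Even S.ncard)

include hfin heven in
lemma partner_below {a : ℕ} (ha : a ∈ S) (hE : Even ((S ∩ Set.Ioi a).ncard)) :
    ∃ b, PairedG S a b ∧ ∀ x ∈ S, x < a → x ≤ b := by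
  have hsplit := ncard_split hfin ha
  have hodd : Odd ((S ∩ Set.Iio a).ncard) := by
    rw [Nat.odd_iff]
    rw [Nat.even_iff] at heven hE
    omega
  have hne : (S ∩ Set.Iio a).Nonempty := by
    apply Set.nonempty_of_ncard_ne_zero
    rw [Nat.odd_iff] at hodd; omega
  set b := sSup (S ∩ Set.Iio a) with hb
  have hbmem : b ∈ S ∩ Set.Iio a := Nat.sSup_mem hne ((hfin.inter_of_left _).bddAbove)
  have hmax : ∀ x ∈ S, x < a → x ≤ b := fun x hx hxa =>
    le_csSup ((hfin.inter_of_left _).bddAbove) ⟨hx, hxa⟩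
  refine ⟨b, ⟨hbmem.2, ha, hbmem.1, hE, ?_⟩, hmax⟩
  ext x
  simp only [Set.mem_inter_iff, Set.mem_Ioo, Set.mem_empty_iff_false, iff_false]
  rintro ⟨hxS, hbx, hxa⟩
  have := hmax x hxS hxa
  omega

include hfin in
lemma partner_above {b : ℕ} (hb : b ∈ S) (hO : Odd ((S ∩ Set.Ioi b).ncard)) :
    ∃ a, PairedG S a b ∧ b < a := by
  have hne : (S ∩ Set.Ioi b).Nonempty := by
    apply Set.nonempty_of_ncard_ne_zero
    rw [Nat.odd_iff] at hO; omega
  set a := sInf (S ∩ Set.Ioi b) with ha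
  have hamem : a ∈ S ∩ Set.Ioi b := Nat.sInf_mem hne
  have hmin : ∀ x ∈ S, b < x → a ≤ x := fun x hx hbx => Nat.sInf_le ⟨hx, hbx⟩
  have hIoo : S ∩ Set.Ioo b a = ∅ := by
    ext x
    simp only [Set.mem_inter_iff, Set.mem_Ioo, Set.mem_empty_iff_false, iff_false]
    rintro ⟨hxS, hbx, hxa⟩
    have := hmin x hxS hbx
    omega
  have hsplit := ncard_Ioi_split hfin hamem.2 hamem.1
  rw [hIoo] at hsplit
  simp only [Set.ncard_empty] at hsplit
  have hE : Even ((S ∩ Set.Ioi a).ncard) := by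
    rw [Nat.even_iff]
    rw [Nat.odd_iff] at hO
    omega
  exact ⟨a, ⟨hamem.2, hamem.1, hb, hE, hIoo⟩, hamem.2⟩

include hfin heven in
lemma covered_of_memG {i : ℕ} (hi : i ∈ S) :
    ∃ a b, PairedG S a b ∧ b ≤ i ∧ i ≤ a := by
  by_cases hE : Even ((S ∩ Set.Ioi i).ncard)
  · obtain ⟨b, hp, _⟩ := partner_below hfin heven hi hE
    exact ⟨i, b, hp, le_of_lt hp.1, le_rfl⟩
  · obtain ⟨a, hp, hba⟩ := partner_above hfin hi (Nat.odd_iff.mpr (by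
      rw [Nat.even_iff] at hE; omega))
    exact ⟨a, i, hp, le_rfl, le_of_lt hba⟩

include hfin heven in
lemma cover_parityG {i : ℕ} (hi : i ∉ S) :
    (∃ a b, PairedG S a b ∧ b ≤ i ∧ i ≤ a) ↔ Odd ((S ∩ Set.Ioi i).ncard) := by
  constructor
  · rintro ⟨a, b, ⟨hba, haS, hbS, hEa, hIoo⟩, hbi, hia⟩
    have hia' : i < a := lt_of_le_of_ne hia (fun h => hi (h ▸ haS))
    have hbi' : b < i := lt_of_le_of_ne hbi (fun h => hi (h ▸ hbS))
    have hsplit := ncard_Ioi_split hfin hia' haS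
    have hemp : S ∩ Set.Ioo i a = ∅ := by
      ext x
      simp only [Set.mem_inter_iff, Set.mem_Ioo, Set.mem_empty_iff_false, iff_false]
      rintro ⟨hxS, hix, hxa⟩
      have : x ∈ S ∩ Set.Ioo b a := ⟨hxS, by omega, hxa⟩
      rw [hIoo] at this
      exact this
    rw [hemp] at hsplit
    simp only [Set.ncard_empty] at hsplit
    rw [Nat.odd_iff]
    rw [Nat.even_iff] at hEa
    omega
  · intro hO
    have hne : (S ∩ Set.Ioi i).Nonempty := by
      apply Set.nonempty_of_ncard_ne_zero
      rw [Nat.odd_iff] at hO; omega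
    set a := sInf (S ∩ Set.Ioi i) with ha
    have hamem : a ∈ S ∩ Set.Ioi i := Nat.sInf_mem hne
    have hmin : ∀ x ∈ S, i < x → a ≤ x := fun x hx hbx => Nat.sInf_le ⟨hx, hbx⟩
    have hIooia : S ∩ Set.Ioo i a = ∅ := by
      ext x
      simp only [Set.mem_inter_iff, Set.mem_Ioo, Set.mem_empty_iff_false, iff_false]
      rintro ⟨hxS, hix, hxa⟩
      have := hmin x hxS hix
      omega
    have hsplit := ncard_Ioi_split hfin hamem.2 hamem.1
    rw [hIooia] at hsplit
    simp only [Set.ncard_empty] at hsplit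
    have hEa : Even ((S ∩ Set.Ioi a).ncard) := by
      rw [Nat.even_iff]; rw [Nat.odd_iff] at hO; omega
    obtain ⟨b, hp, hmax⟩ := partner_below hfin heven hamem.1 hEa
    refine ⟨a, b, hp, ?_, le_of_lt hamem.2⟩
    -- b ≤ i : b ∈ S, b < a, b ≠ i, and not in (i, a)
    have hbS := hp.2.2.1
    have hba := hp.1
    by_contra hc
    push_neg at hc
    have : b ∈ S ∩ Set.Ioo i a := ⟨hbS, hc, hba⟩
    rw [hIooia] at this
    exact this

end PairedG

section CountMono
variable {f : ℕ → ℕ} {M : ℕ}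

lemma filter_gt_eq (hmono : ∀ ⦃j k : ℕ⦄, 1 ≤ j → j ≤ k → f k ≤ f j)
    (hM : ∀ j, M < j → f j = 0) {j w : ℕ} (hj : 1 ≤ j) (h1 : f j ≤ w)
    (h2 : ∀ k, 1 ≤ k → k < j → w < f k) :
    (Finset.Icc 1 M).filter (fun k => w < f k) = Finset.Icc 1 (j-1) := by
  ext k
  simp only [Finset.mem_filter, Finset.mem_Icc]
  constructor
  · rintro ⟨⟨hk1, hkM⟩, hk⟩
    refine ⟨hk1, ?_⟩
    by_contra hc
    have : f k ≤ f j := hmono hj (by omega)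
    omega
  · rintro ⟨hk1, hk2⟩
    have hw := h2 k hk1 (by omega)
    refine ⟨⟨hk1, ?_⟩, hw⟩
    by_contra hc
    have := hM k (by omega); omega

lemma OddSet_inter_coe (hmono : ∀ ⦃j k : ℕ⦄, 1 ≤ j → j ≤ k → f k ≤ f j)
    (hM : ∀ j, M < j → f j = 0) (w : ℕ) :
    OddSet f ∩ Set.Ioi w
      = ↑((Finset.Icc (w+1) (f 1)).filter (fun i => Odd (mult f i))) := by
  ext i
  simp only [OddSet, Set.mem_inter_iff, Set.mem_setOf_eq, Set.mem_Ioi, Finset.coe_filter,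
    Finset.mem_Icc]
  constructor
  · rintro ⟨h1, h2⟩
    have hi1 : 1 ≤ i := by omega
    have hpos : 1 ≤ mult f i := by rcases h1 with ⟨t, ht⟩; omega
    obtain ⟨j, hj1, _, hj3⟩ := exists_of_mult hM hi1 hpos
    have : f j ≤ f 1 := hmono le_rfl hj1
    exact ⟨⟨by omega, by omega⟩, h1⟩
  · rintro ⟨⟨h1, _⟩, h2⟩
    exact ⟨h2, by omega⟩

lemma card_gt_parity (hmono : ∀ ⦃j k : ℕ⦄, 1 ≤ j → j ≤ k → f k ≤ f j)
    (hM : ∀ j, M < j → f j = 0) (w : ℕ) :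
    (Even ((Finset.Icc 1 M).filter (fun k => w < f k)).card
      ↔ Even ((OddSet f ∩ Set.Ioi w).ncard)) := by
  have hfib : ((Finset.Icc 1 M).filter (fun k => w < f k)).card
      = ∑ i ∈ Finset.Icc (w+1) (f 1), mult f i := by
    rw [Finset.card_eq_sum_card_fiberwise (f := f) (t := Finset.Icc (w+1) (f 1)) ?_]
    · refine Finset.sum_congr rfl ?_
      intro i hi
      simp only [Finset.mem_Icc] at hi
      rw [mult_eq_card hM (by omega : 1 ≤ i)]
      congr 1
      rw [Finset.filter_filter]
      apply Finset.filter_congr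
      intro k _
      constructor
      · rintro ⟨_, h⟩; exact h
      · intro h; exact ⟨by omega, h⟩
    · intro k hk
      simp only [Finset.mem_coe, Finset.mem_filter, Finset.mem_Icc] at hk ⊢
      exact ⟨by omega, hmono le_rfl hk.1.1⟩
  rw [hfib, Finset.even_sum_iff_even_card_odd,
    OddSet_inter_coe hmono hM w, Set.ncard_coe_finset]

lemma Dsymp_inter_Ioi (f : ℕ → ℕ) (w : ℕ) :
    Dsymp f ∩ Set.Ioi w = OddSet f ∩ Set.Ioi w := by
  ext i
  simp only [Dsymp, OddSet, Set.mem_inter_iff, Set.mem_setOf_eq, Set.mem_Ioi]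
  constructor
  · rintro ⟨h1 | ⟨rfl, _⟩, h2⟩
    · exact ⟨h1, h2⟩
    · omega
  · rintro ⟨h1, h2⟩; exact ⟨Or.inl h1, h2⟩

lemma OddSet_finite (hM : ∀ j, M < j → f j = 0)
    (hmono : ∀ ⦃j k : ℕ⦄, 1 ≤ j → j ≤ k → f k ≤ f j) : (OddSet f).Finite := by
  apply Set.Finite.subset (Set.finite_Icc 1 (f 1))
  intro i hi
  simp only [OddSet, Set.mem_setOf_eq] at hi
  have hpos : 1 ≤ mult f i := by rcases hi with ⟨t, ht⟩; omega
  have hi1 : 1 ≤ i := by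
    by_contra hc
    have : i = 0 := by omega
    subst this
    rw [mult_zero hM] at hpos; omega
  obtain ⟨j, hj1, _, hj3⟩ := exists_of_mult hM hi1 hpos
  have : f j ≤ f 1 := hmono le_rfl hj1
  exact Set.mem_Icc.mpr ⟨hi1, by omega⟩

lemma Dsymp_finite (hM : ∀ j, M < j → f j = 0)
    (hmono : ∀ ⦃j k : ℕ⦄, 1 ≤ j → j ≤ k → f k ≤ f j) : (Dsymp f).Finite := by
  apply Set.Finite.subset ((OddSet_finite hM hmono).union (Set.finite_singleton 0))
  rintro i (h | ⟨rfl, _⟩)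
  · exact Or.inl h
  · exact Or.inr rfl

lemma Dsymp_even_ncard (hM : ∀ j, M < j → f j = 0)
    (hmono : ∀ ⦃j k : ℕ⦄, 1 ≤ j → j ≤ k → f k ≤ f j) : Even (Dsymp f).ncard := by
  have h0 : 0 ∉ OddSet f := by
    simp only [OddSet, Set.mem_setOf_eq, mult_zero hM]
    exact (by decide : ¬ Odd 0)
  by_cases hodd : Odd (OddSet f).ncard
  · have : Dsymp f = insert 0 (OddSet f) := by
      ext i
      simp only [Dsymp, OddSet, Set.mem_setOf_eq, Set.mem_insert_iff]
      constructor
      · rintro (h | ⟨rfl, _⟩)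
        · exact Or.inr h
        · exact Or.inl rfl
      · rintro (rfl | h)
        · exact Or.inr ⟨rfl, hodd⟩
        · exact Or.inl h
    rw [this, Set.ncard_insert_of_notMem h0 (OddSet_finite hM hmono)]
    rcases hodd with ⟨t, ht⟩
    exact ⟨t+1, by omega⟩
  · have : Dsymp f = OddSet f := by
      ext i
      simp only [Dsymp, OddSet, Set.mem_setOf_eq]
      constructor
      · rintro (h | ⟨rfl, h⟩)
        · exact h
        · exact absurd h hodd
      · exact Or.inl
    rw [this]
    exact Nat.not_odd_iff_even.mp hodd

end CountMono

section C12
variable {f : ℕ → ℕ} {M : ℕ}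

lemma Dsymp_even_mem (hsymp : Symp f) {i : ℕ} (hi : i ∈ Dsymp f) : Even i := by
  rcases hi with h | ⟨rfl, _⟩
  · by_contra hodd
    rw [Nat.not_even_iff_odd] at hodd
    have h2 := hsymp i hodd
    rw [Nat.even_iff] at h2
    rw [Nat.odd_iff] at h
    omega
  · exact Even.zero

lemma OddSet_not_mem_zero (hM : ∀ j, M < j → f j = 0) : 0 ∉ OddSet f := by
  simp only [OddSet, Set.mem_setOf_eq, mult_zero hM]
  decide

lemma Dsymp_Ioi_zero (hM : ∀ j, M < j → f j = 0) :
    Dsymp f ∩ Set.Ioi 0 = OddSet f := by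
  rw [Dsymp_inter_Ioi]
  ext i
  simp only [Set.mem_inter_iff, Set.mem_Ioi]
  constructor
  · rintro ⟨h, _⟩; exact h
  · intro h
    refine ⟨h, ?_⟩
    by_contra hc
    have h0 : i = 0 := by omega
    subst h0
    exact OddSet_not_mem_zero hM h

lemma least_parity (hmono : ∀ ⦃j k : ℕ⦄, 1 ≤ j → j ≤ k → f k ≤ f j)
    (hM : ∀ j, M < j → f j = 0) {j v : ℕ} (hj : 1 ≤ j) (h1 : f j ≤ v)
    (h2 : ∀ k, 1 ≤ k → k < j → v < f k) :
    (Odd j ↔ Even ((Dsymp f ∩ Set.Ioi v).ncard)) := by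
  have h := card_gt_parity hmono hM (w := v)
  rw [filter_gt_eq hmono hM hj h1 h2, Nat.card_Icc] at h
  rw [Dsymp_inter_Ioi, ← h, Nat.odd_iff, Nat.even_iff]
  omega

lemma greatest_parity (hmono : ∀ ⦃j k : ℕ⦄, 1 ≤ j → j ≤ k → f k ≤ f j)
    (hM : ∀ j, M < j → f j = 0) {j b : ℕ} (hj : 1 ≤ j) (hb : 1 ≤ b) (h1 : b ≤ f j)
    (h2 : ∀ k, j < k → f k < b) :
    (Even j ↔ Even ((Dsymp f ∩ Set.Ici b).ncard)) := by
  have h := card_gt_parity hmono hM (w := b-1)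
  have h2' : ∀ k, 1 ≤ k → k < j+1 → b-1 < f k := by
    intro k hk1 hkj
    have : f j ≤ f k := hmono hk1 (by omega)
    omega
  have hfil := filter_gt_eq hmono hM (j := j+1) (w := b-1) (by omega)
    (by have := h2 (j+1) (by omega); omega) h2'
  rw [hfil, Nat.card_Icc] at h
  have hIci : Dsymp f ∩ Set.Ici b = OddSet f ∩ Set.Ioi (b-1) := by
    rw [← Dsymp_inter_Ioi]
    ext x
    simp only [Set.mem_inter_iff, Set.mem_Ici, Set.mem_Ioi]
    constructor
    · rintro ⟨hx, hx2⟩; exact ⟨hx, by omega⟩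
    · rintro ⟨hx, hx2⟩; exact ⟨hx, by omega⟩
  rw [show j + 1 - 1 = j from by omega] at h
  rw [hIci]
  exact h

theorem minS_iff (hmono : ∀ ⦃j k : ℕ⦄, 1 ≤ j → j ≤ k → f k ≤ f j)
    (hM : ∀ j, M < j → f j = 0) (hsymp : Symp f) {j : ℕ} (hj : 1 ≤ j) :
    (∃ Δ, IsIntervalS f Δ ∧ IsLeast (Jset f Δ) j)
      ↔ (Odd j ∧ Even (f j) ∧ (j = 1 ∨ f (j-1) ≠ f j)) := by
  have hDfin : (Dsymp f).Finite := Dsymp_finite hM hmono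
  have hDeven : Even (Dsymp f).ncard := Dsymp_even_ncard hM hmono
  constructor
  · rintro ⟨Δ, hint, hmemJ, hlb⟩
    rcases hint with ⟨a, b, hpair, rfl⟩ | ⟨i, hieven, hicond, hnocov, rfl⟩
    · obtain ⟨hba, haD, hbD, hEa, hIoo⟩ := hpair
      obtain ⟨hj1, hcond, hbf, hfa⟩ := hmemJ
      have ha1 : 1 ≤ a := by omega
      have hamult : Odd (mult f a) := by
        rcases haD with h | ⟨rfl, _⟩
        · exact h
        · omega
      obtain ⟨ja, hja1, hjaM, hja3⟩ := exists_of_mult hM ha1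
        (by rcases hamult with ⟨t, ht⟩; omega)
      have hjaJ : ja ∈ Jset f {i | (i = 0 ∨ 1 ≤ mult f i) ∧ b ≤ i ∧ i ≤ a} := by
        refine ⟨hja1, ?_⟩
        simp only [Set.mem_setOf_eq, hja3]
        exact ⟨Or.inr (by rcases hamult with ⟨t, ht⟩; omega), by omega, le_rfl⟩
      have hja : j ≤ ja := hlb hjaJ
      have hfj_ge : a ≤ f j := by
        have := hmono hj hja
        omega
      have hfja : f j = a := le_antisymm hfa hfj_ge
      have hfeven : Even (f j) := hfja ▸ Dsymp_even_mem hsymp haD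
      have h2 : ∀ k, 1 ≤ k → k < j → a < f k := by
        intro k hk1 hkj
        have hge : f j ≤ f k := hmono hk1 (by omega)
        rcases lt_or_eq_of_le (show a ≤ f k by omega) with h | h
        · exact h
        · exfalso
          have hkJ : k ∈ Jset f {i | (i = 0 ∨ 1 ≤ mult f i) ∧ b ≤ i ∧ i ≤ a} := by
            refine ⟨hk1, ?_⟩
            simp only [Set.mem_setOf_eq, ← h]
            exact ⟨Or.inr (by rcases hamult with ⟨t, ht⟩; omega), by omega, le_rfl⟩
          have := hlb hkJ
          omega
      refine ⟨(least_parity hmono hM hj (by omega) h2).mpr hEa, hfeven, ?_⟩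
      by_cases hj1' : j = 1
      · exact Or.inl hj1'
      · refine Or.inr ?_
        intro heq
        have hkJ : j - 1 ∈ Jset f {i | (i = 0 ∨ 1 ≤ mult f i) ∧ b ≤ i ∧ i ≤ a} := by
          refine ⟨by omega, ?_⟩
          simp only [Set.mem_setOf_eq, heq, hfja]
          exact ⟨Or.inr (by rcases hamult with ⟨t, ht⟩; omega), by omega, le_rfl⟩
        have := hlb hkJ
        omega
    · obtain ⟨hj1, hfi⟩ := hmemJ
      rw [Set.mem_singleton_iff] at hfi
      have hinotD : i ∉ Dsymp f := by
        intro hiD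
        obtain ⟨a', b', hp, hb', ha'⟩ := covered_of_memG hDfin hDeven hiD
        exact hnocov ⟨a', b', hp, hb', ha'⟩
      have h2 : ∀ k, 1 ≤ k → k < j → i < f k := by
        intro k hk1 hkj
        have hge : f j ≤ f k := hmono hk1 (by omega)
        rcases lt_or_eq_of_le (show i ≤ f k by omega) with h | h
        · exact h
        · exfalso
          have hkJ : k ∈ Jset f {i} := ⟨hk1, by rw [← h]; rfl⟩
          have := hlb hkJ
          omega
      have hEven : Even ((Dsymp f ∩ Set.Ioi i).ncard) := by
        by_contra hodd
        rw [Nat.not_even_iff_odd] at hodd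
        exact hnocov ((cover_parityG hDfin hDeven hinotD).mpr hodd)
      refine ⟨(least_parity hmono hM hj (by omega) h2).mpr hEven, hfi ▸ hieven, ?_⟩
      by_cases hj1' : j = 1
      · exact Or.inl hj1'
      · refine Or.inr ?_
        intro heq
        have hkJ : j - 1 ∈ Jset f {i} := ⟨by omega, by rw [heq, hfi]; rfl⟩
        have := hlb hkJ
        omega
  · rintro ⟨hjodd, hfeven, hne⟩
    have hlt : ∀ k, 1 ≤ k → k < j → f j < f k := by
      intro k hk1 hkj
      have hj2 : 2 ≤ j := by omega
      have h1 : f (j-1) ≤ f k := hmono hk1 (by omega)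
      have h2 : f j ≤ f (j-1) := hmono (by omega) (by omega)
      have h3 : f (j-1) ≠ f j := by
        rcases hne with h | h
        · omega
        · exact h
      omega
    have hEodd : Even ((Dsymp f ∩ Set.Ioi (f j)).ncard) :=
      (least_parity hmono hM hj le_rfl hlt).mp hjodd
    by_cases hmulta : Odd (mult f (f j))
    · have ha1 : 1 ≤ f j := by
        by_contra hc
        have h0 : f j = 0 := by omega
        rw [h0, mult_zero hM] at hmulta
        exact (by decide : ¬ Odd 0) hmulta
      have haD : f j ∈ Dsymp f := Or.inl hmulta
      obtain ⟨b, hp, hmax⟩ := partner_below hDfin hDeven haD hEodd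
      refine ⟨{i | (i = 0 ∨ 1 ≤ mult f i) ∧ b ≤ i ∧ i ≤ f j},
        Or.inl ⟨f j, b, hp, rfl⟩, ⟨hj, Or.inr (by rcases hmulta with ⟨t, ht⟩; omega),
          le_of_lt hp.1, le_rfl⟩, ?_⟩
      rintro k ⟨hk1, _, _, hfk⟩
      by_contra hc
      have := hlt k hk1 (by omega)
      omega
    · have hinotD : f j ∉ Dsymp f := by
        rintro (h | ⟨h0, hOodd⟩)
        · exact hmulta h
        · rw [h0] at hEodd
          rw [Dsymp_Ioi_zero hM] at hEodd
          rw [Nat.even_iff] at hEodd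
          rw [Nat.odd_iff] at hOodd
          omega
      have hnocov : ¬ ∃ a b, PairedS f a b ∧ b ≤ f j ∧ f j ≤ a := by
        intro hcov
        have := (cover_parityG hDfin hDeven hinotD).mp hcov
        rw [Nat.odd_iff] at this
        rw [Nat.even_iff] at hEodd
        omega
      have hicond : f j = 0 ∨ (2 ≤ f j ∧ 1 ≤ mult f (f j)) := by
        by_cases h0 : f j = 0
        · exact Or.inl h0
        · refine Or.inr ⟨?_, one_le_mult hM hj (by omega)⟩
          rcases hfeven with ⟨t, ht⟩
          omega
      refine ⟨{f j}, Or.inr ⟨f j, hfeven, hicond, hnocov, rfl⟩, ⟨hj, rfl⟩, ?_⟩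
      rintro k ⟨hk1, hfk⟩
      rw [Set.mem_singleton_iff] at hfk
      by_contra hc
      have := hlt k hk1 (by omega)
      omega

end C12

section C2
variable {f : ℕ → ℕ} {M : ℕ}

lemma Dsymp_Ici_of_not_mem {i : ℕ} (hi : i ∉ Dsymp f) :
    Dsymp f ∩ Set.Ici i = Dsymp f ∩ Set.Ioi i := by
  ext x
  simp only [Set.mem_inter_iff, Set.mem_Ici, Set.mem_Ioi]
  constructor
  · rintro ⟨hx, hx2⟩
    refine ⟨hx, ?_⟩
    rcases lt_or_eq_of_le hx2 with h | h
    · exact h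
    · exact absurd (h ▸ hx) hi
  · rintro ⟨hx, hx2⟩
    exact ⟨hx, by omega⟩

theorem maxS_iff (hmono : ∀ ⦃j k : ℕ⦄, 1 ≤ j → j ≤ k → f k ≤ f j)
    (hM : ∀ j, M < j → f j = 0) (hsymp : Symp f) {j : ℕ} (hj : 1 ≤ j) :
    (∃ Δ, IsIntervalS f Δ ∧ IsGreatest (Jset f Δ) j)
      ↔ (Even j ∧ Even (f j) ∧ 2 ≤ f j ∧ f (j+1) ≠ f j) := by
  have hDfin : (Dsymp f).Finite := Dsymp_finite hM hmono
  have hDeven : Even (Dsymp f).ncard := Dsymp_even_ncard hM hmono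
  constructor
  · rintro ⟨Δ, hint, hmemJ, hub⟩
    rcases hint with ⟨a, b, hpair, rfl⟩ | ⟨i, hieven, hicond, hnocov, rfl⟩
    · obtain ⟨hba, haD, hbD, hEa, hIoo⟩ := hpair
      obtain ⟨hj1, hcond, hbf, hfa⟩ := hmemJ
      have hb1 : 1 ≤ b := by
        by_contra hb0
        have hb0' : b = 0 := by omega
        have hk0 : M + j + 1 ∈ Jset f {i | (i = 0 ∨ 1 ≤ mult f i) ∧ b ≤ i ∧ i ≤ a} := by
          refine ⟨by omega, ?_⟩
          simp only [Set.mem_setOf_eq, hM (M+j+1) (by omega)]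
          exact ⟨by tauto, by omega, by omega⟩
        have := hub hk0
        omega
      have hbmult : Odd (mult f b) := by
        rcases hbD with h | ⟨rfl, _⟩
        · exact h
        · omega
      obtain ⟨jb, hjb1, hjbM, hjb3⟩ := exists_of_mult hM hb1
        (by rcases hbmult with ⟨t, ht⟩; omega)
      have hjbJ : jb ∈ Jset f {i | (i = 0 ∨ 1 ≤ mult f i) ∧ b ≤ i ∧ i ≤ a} := by
        refine ⟨hjb1, ?_⟩
        simp only [Set.mem_setOf_eq, hjb3]
        exact ⟨Or.inr (by rcases hbmult with ⟨t, ht⟩; omega), le_rfl, by omega⟩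
      have hjbj : jb ≤ j := hub hjbJ
      have hfj_le : f j ≤ b := by
        have := hmono hjb1 hjbj
        omega
      have hfjb : f j = b := le_antisymm hfj_le hbf
      have hfeven : Even (f j) := hfjb ▸ Dsymp_even_mem hsymp hbD
      have h2 : ∀ k, j < k → f k < b := by
        intro k hkj
        have hle : f k ≤ f j := hmono hj (by omega)
        rcases lt_or_eq_of_le (show f k ≤ b by omega) with h | h
        · exact h
        · exfalso
          have hkJ : k ∈ Jset f {i | (i = 0 ∨ 1 ≤ mult f i) ∧ b ≤ i ∧ i ≤ a} := by
            refine ⟨by omega, ?_⟩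
            simp only [Set.mem_setOf_eq, h]
            exact ⟨Or.inr (by rcases hbmult with ⟨t, ht⟩; omega), le_rfl, by omega⟩
          have := hub hkJ
          omega
      have hEIci : Even ((Dsymp f ∩ Set.Ici b).ncard) := by
        have hsplit := ncard_Ioi_split hDfin hba haD
        rw [hIoo] at hsplit
        simp only [Set.ncard_empty] at hsplit
        rw [ncard_Ici hDfin hbD, hsplit]
        rcases hEa with ⟨t, ht⟩
        exact ⟨t + 1, by omega⟩
      refine ⟨(greatest_parity hmono hM hj hb1 hbf h2).mpr hEIci, hfeven,
        by rcases hfeven with ⟨t, ht⟩; omega, ?_⟩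
      intro heq
      have hkJ : j + 1 ∈ Jset f {i | (i = 0 ∨ 1 ≤ mult f i) ∧ b ≤ i ∧ i ≤ a} := by
        refine ⟨by omega, ?_⟩
        simp only [Set.mem_setOf_eq, heq, hfjb]
        exact ⟨Or.inr (by rcases hbmult with ⟨t, ht⟩; omega), le_rfl, by omega⟩
      have := hub hkJ
      omega
    · obtain ⟨hj1, hfi⟩ := hmemJ
      rw [Set.mem_singleton_iff] at hfi
      have hi0 : i ≠ 0 := by
        intro h0
        have hk0 : M + j + 1 ∈ Jset f {i} := by
          refine ⟨by omega, ?_⟩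
          rw [Set.mem_singleton_iff, hM (M+j+1) (by omega), h0]
        have := hub hk0
        omega
      have hi2 : 2 ≤ i ∧ 1 ≤ mult f i := by
        rcases hicond with h | h
        · exact absurd h hi0
        · exact h
      have hinotD : i ∉ Dsymp f := by
        intro hiD
        exact hnocov (covered_of_memG hDfin hDeven hiD)
      have h2 : ∀ k, j < k → f k < i := by
        intro k hkj
        have hle : f k ≤ f j := hmono hj (by omega)
        rcases lt_or_eq_of_le (show f k ≤ i by omega) with h | h
        · exact h
        · exfalso
          have hkJ : k ∈ Jset f {i} := ⟨by omega, h⟩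
          have := hub hkJ
          omega
      have hEIoi : Even ((Dsymp f ∩ Set.Ioi i).ncard) := by
        by_contra hodd
        rw [Nat.not_even_iff_odd] at hodd
        exact hnocov ((cover_parityG hDfin hDeven hinotD).mpr hodd)
      have hEIci : Even ((Dsymp f ∩ Set.Ici i).ncard) := by
        rw [Dsymp_Ici_of_not_mem hinotD]
        exact hEIoi
      refine ⟨(greatest_parity hmono hM hj (by omega) (le_of_eq hfi.symm) h2).mpr hEIci,
        hfi ▸ hieven, by omega, ?_⟩
      intro heq
      have hkJ : j + 1 ∈ Jset f {i} := ⟨by omega, by rw [Set.mem_singleton_iff, heq, hfi]⟩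
      have := hub hkJ
      omega
  · rintro ⟨hjeven, hfeven, hf2, hne⟩
    have h2 : ∀ k, j < k → f k < f j := by
      intro k hkj
      have h1 : f k ≤ f (j+1) := hmono (by omega) (by omega)
      have h2' : f (j+1) ≤ f j := hmono hj (by omega)
      omega
    have hEIci : Even ((Dsymp f ∩ Set.Ici (f j)).ncard) :=
      (greatest_parity hmono hM hj (by omega) le_rfl h2).mp hjeven
    by_cases hmultb : Odd (mult f (f j))
    · have hbD : f j ∈ Dsymp f := Or.inl hmultb
      have hOIoi : Odd ((Dsymp f ∩ Set.Ioi (f j)).ncard) := by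
        rw [ncard_Ici hDfin hbD] at hEIci
        rw [Nat.odd_iff]
        rw [Nat.even_iff] at hEIci
        omega
      obtain ⟨a, hp, hba⟩ := partner_above hDfin hbD hOIoi
      refine ⟨{i | (i = 0 ∨ 1 ≤ mult f i) ∧ f j ≤ i ∧ i ≤ a},
        Or.inl ⟨a, f j, hp, rfl⟩,
        ⟨hj, Or.inr (by rcases hmultb with ⟨t, ht⟩; omega), le_rfl, le_of_lt hba⟩, ?_⟩
      rintro k ⟨hk1, _, hbfk, _⟩
      by_contra hc
      have := h2 k (by omega)
      omega
    · have hbnotD : f j ∉ Dsymp f := by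
        rintro (h | ⟨h0, _⟩)
        · exact hmultb h
        · omega
      have hEIoi : Even ((Dsymp f ∩ Set.Ioi (f j)).ncard) := by
        rw [Dsymp_Ici_of_not_mem hbnotD] at hEIci
        exact hEIci
      have hnocov : ¬ ∃ a b, PairedS f a b ∧ b ≤ f j ∧ f j ≤ a := by
        intro hcov
        have := (cover_parityG hDfin hDeven hbnotD).mp hcov
        rw [Nat.odd_iff] at this
        rw [Nat.even_iff] at hEIoi
        omega
      refine ⟨{f j}, Or.inr ⟨f j, hfeven, Or.inr ⟨hf2, one_le_mult hM hj (by omega)⟩,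
        hnocov, rfl⟩, ⟨hj, rfl⟩, ?_⟩
      rintro k ⟨hk1, hfk⟩
      rw [Set.mem_singleton_iff] at hfk
      by_contra hc
      have := h2 k (by omega)
      omega

end C2

section C34
variable {f : ℕ → ℕ} {M : ℕ}

lemma OddSet_odd_mem (horth : Orth f) (hM : ∀ j, M < j → f j = 0) {i : ℕ}
    (hi : i ∈ OddSet f) : Odd i := by
  by_contra heven
  rw [Nat.not_odd_iff_even] at heven
  have h1 : 1 ≤ i := by
    by_contra hc
    have h0 : i = 0 := by omega
    subst h0
    exact OddSet_not_mem_zero hM hi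
  have h2 := horth i heven h1
  rw [Nat.even_iff] at h2
  have h3 : Odd (mult f i) := hi
  rw [Nat.odd_iff] at h3
  omega

lemma least_parityO (hmono : ∀ ⦃j k : ℕ⦄, 1 ≤ j → j ≤ k → f k ≤ f j)
    (hM : ∀ j, M < j → f j = 0) {j v : ℕ} (hj : 1 ≤ j) (h1 : f j ≤ v)
    (h2 : ∀ k, 1 ≤ k → k < j → v < f k) :
    (Odd j ↔ Even ((OddSet f ∩ Set.Ioi v).ncard)) := by
  have h := card_gt_parity hmono hM (w := v)
  rw [filter_gt_eq hmono hM hj h1 h2, Nat.card_Icc] at h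
  rw [← h, Nat.odd_iff, Nat.even_iff]
  omega

lemma greatest_parityO (hmono : ∀ ⦃j k : ℕ⦄, 1 ≤ j → j ≤ k → f k ≤ f j)
    (hM : ∀ j, M < j → f j = 0) {j b : ℕ} (hj : 1 ≤ j) (hb : 1 ≤ b) (h1 : b ≤ f j)
    (h2 : ∀ k, j < k → f k < b) :
    (Even j ↔ Even ((OddSet f ∩ Set.Ici b).ncard)) := by
  have h := card_gt_parity hmono hM (w := b-1)
  have h2' : ∀ k, 1 ≤ k → k < j+1 → b-1 < f k := by
    intro k hk1 hkj
    have : f j ≤ f k := hmono hk1 (by omega)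
    omega
  have hfil := filter_gt_eq hmono hM (j := j+1) (w := b-1) (by omega)
    (by have := h2 (j+1) (by omega); omega) h2'
  rw [hfil, Nat.card_Icc] at h
  have hIci : OddSet f ∩ Set.Ici b = OddSet f ∩ Set.Ioi (b-1) := by
    ext x
    simp only [Set.mem_inter_iff, Set.mem_Ici, Set.mem_Ioi]
    constructor
    · rintro ⟨hx, hx2⟩; exact ⟨hx, by omega⟩
    · rintro ⟨hx, hx2⟩; exact ⟨hx, by omega⟩
  rw [show j + 1 - 1 = j from by omega] at h
  rw [hIci]
  exact h

lemma OddSet_Ici_of_not_mem {i : ℕ} (hi : i ∉ OddSet f) :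
    OddSet f ∩ Set.Ici i = OddSet f ∩ Set.Ioi i := by
  ext x
  simp only [Set.mem_inter_iff, Set.mem_Ici, Set.mem_Ioi]
  constructor
  · rintro ⟨hx, hx2⟩
    refine ⟨hx, ?_⟩
    rcases lt_or_eq_of_le hx2 with h | h
    · exact h
    · exact absurd (h ▸ hx) hi
  · rintro ⟨hx, hx2⟩
    exact ⟨hx, by omega⟩

theorem minOE_iff (hmono : ∀ ⦃j k : ℕ⦄, 1 ≤ j → j ≤ k → f k ≤ f j)
    (hM : ∀ j, M < j → f j = 0) (horth : Orth f) (hOE : Even (OddSet f).ncard)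
    {j : ℕ} (hj : 1 ≤ j) :
    (∃ Δ, IsIntervalOE f Δ ∧ IsLeast (Jset f Δ) j)
      ↔ (Odd j ∧ Odd (f j) ∧ (j = 1 ∨ f (j-1) ≠ f j)) := by
  have hOfin : (OddSet f).Finite := OddSet_finite hM hmono
  constructor
  · rintro ⟨Δ, hint, hmemJ, hlb⟩
    rcases hint with ⟨a, b, hpair, rfl⟩ | ⟨i, hiodd, himult, hnocov, rfl⟩
    · obtain ⟨hba, haO, hbO, hEa, hIoo⟩ := hpair
      obtain ⟨hj1, hmul, hbf, hfa⟩ := hmemJ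
      have hamult : Odd (mult f a) := haO
      have ha1 : 1 ≤ a := by
        have := OddSet_odd_mem horth hM haO
        omega
      obtain ⟨ja, hja1, hjaM, hja3⟩ := exists_of_mult hM ha1
        (by rcases hamult with ⟨t, ht⟩; omega)
      have hjaJ : ja ∈ Jset f {i | 1 ≤ mult f i ∧ b ≤ i ∧ i ≤ a} := by
        refine ⟨hja1, ?_⟩
        simp only [Set.mem_setOf_eq, hja3]
        exact ⟨by rcases hamult with ⟨t, ht⟩; omega, by omega, le_rfl⟩
      have hja : j ≤ ja := hlb hjaJ
      have hfj_ge : a ≤ f j := by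
        have := hmono hj hja
        omega
      have hfja : f j = a := le_antisymm hfa hfj_ge
      have hfodd : Odd (f j) := hfja ▸ OddSet_odd_mem horth hM haO
      have h2 : ∀ k, 1 ≤ k → k < j → a < f k := by
        intro k hk1 hkj
        have hge : f j ≤ f k := hmono hk1 (by omega)
        rcases lt_or_eq_of_le (show a ≤ f k by omega) with h | h
        · exact h
        · exfalso
          have hkJ : k ∈ Jset f {i | 1 ≤ mult f i ∧ b ≤ i ∧ i ≤ a} := by
            refine ⟨hk1, ?_⟩
            simp only [Set.mem_setOf_eq, ← h]
            exact ⟨by rcases hamult with ⟨t, ht⟩; omega, by omega, le_rfl⟩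
          have := hlb hkJ
          omega
      refine ⟨(least_parityO hmono hM hj (by omega) h2).mpr hEa, hfodd, ?_⟩
      by_cases hj1' : j = 1
      · exact Or.inl hj1'
      · refine Or.inr ?_
        intro heq
        have hkJ : j - 1 ∈ Jset f {i | 1 ≤ mult f i ∧ b ≤ i ∧ i ≤ a} := by
          refine ⟨by omega, ?_⟩
          simp only [Set.mem_setOf_eq, heq, hfja]
          exact ⟨by rcases hamult with ⟨t, ht⟩; omega, by omega, le_rfl⟩
        have := hlb hkJ
        omega
    · obtain ⟨hj1, hfi⟩ := hmemJ
      rw [Set.mem_singleton_iff] at hfi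
      have hinotO : i ∉ OddSet f := by
        intro hiO
        exact hnocov (covered_of_memG hOfin hOE hiO)
      have h2 : ∀ k, 1 ≤ k → k < j → i < f k := by
        intro k hk1 hkj
        have hge : f j ≤ f k := hmono hk1 (by omega)
        rcases lt_or_eq_of_le (show i ≤ f k by omega) with h | h
        · exact h
        · exfalso
          have hkJ : k ∈ Jset f {i} := ⟨hk1, by rw [← h]; rfl⟩
          have := hlb hkJ
          omega
      have hEven : Even ((OddSet f ∩ Set.Ioi i).ncard) := by
        by_contra hodd
        rw [Nat.not_even_iff_odd] at hodd
        exact hnocov ((cover_parityG hOfin hOE hinotO).mpr hodd)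
      refine ⟨(least_parityO hmono hM hj (by omega) h2).mpr hEven, hfi ▸ hiodd, ?_⟩
      by_cases hj1' : j = 1
      · exact Or.inl hj1'
      · refine Or.inr ?_
        intro heq
        have hkJ : j - 1 ∈ Jset f {i} := ⟨by omega, by rw [heq, hfi]; rfl⟩
        have := hlb hkJ
        omega
  · rintro ⟨hjodd, hfodd, hne⟩
    have hlt : ∀ k, 1 ≤ k → k < j → f j < f k := by
      intro k hk1 hkj
      have hj2 : 2 ≤ j := by omega
      have h1 : f (j-1) ≤ f k := hmono hk1 (by omega)
      have h2 : f j ≤ f (j-1) := hmono (by omega) (by omega)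
      have h3 : f (j-1) ≠ f j := by
        rcases hne with h | h
        · omega
        · exact h
      omega
    have hf1 : 1 ≤ f j := by rcases hfodd with ⟨t, ht⟩; omega
    have hEodd : Even ((OddSet f ∩ Set.Ioi (f j)).ncard) :=
      (least_parityO hmono hM hj le_rfl hlt).mp hjodd
    by_cases hmulta : Odd (mult f (f j))
    · have haO : f j ∈ OddSet f := hmulta
      obtain ⟨b, hp, hmax⟩ := partner_below hOfin hOE haO hEodd
      refine ⟨{i | 1 ≤ mult f i ∧ b ≤ i ∧ i ≤ f j},
        Or.inl ⟨f j, b, hp, rfl⟩, ⟨hj, by rcases hmulta with ⟨t, ht⟩; omega,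
          le_of_lt hp.1, le_rfl⟩, ?_⟩
      rintro k ⟨hk1, _, _, hfk⟩
      by_contra hc
      have := hlt k hk1 (by omega)
      omega
    · have hinotO : f j ∉ OddSet f := hmulta
      have hnocov : ¬ ∃ a b, PairedOE f a b ∧ b ≤ f j ∧ f j ≤ a := by
        intro hcov
        have := (cover_parityG hOfin hOE hinotO).mp hcov
        rw [Nat.odd_iff] at this
        rw [Nat.even_iff] at hEodd
        omega
      refine ⟨{f j}, Or.inr ⟨f j, hfodd, one_le_mult hM hj hf1, hnocov, rfl⟩,
        ⟨hj, rfl⟩, ?_⟩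
      rintro k ⟨hk1, hfk⟩
      rw [Set.mem_singleton_iff] at hfk
      by_contra hc
      have := hlt k hk1 (by omega)
      omega

theorem maxOE_iff (hmono : ∀ ⦃j k : ℕ⦄, 1 ≤ j → j ≤ k → f k ≤ f j)
    (hM : ∀ j, M < j → f j = 0) (horth : Orth f) (hOE : Even (OddSet f).ncard)
    {j : ℕ} (hj : 1 ≤ j) :
    (∃ Δ, IsIntervalOE f Δ ∧ IsGreatest (Jset f Δ) j)
      ↔ (Even j ∧ Odd (f j) ∧ f (j+1) ≠ f j) := by
  have hOfin : (OddSet f).Finite := OddSet_finite hM hmono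
  constructor
  · rintro ⟨Δ, hint, hmemJ, hub⟩
    rcases hint with ⟨a, b, hpair, rfl⟩ | ⟨i, hiodd, himult, hnocov, rfl⟩
    · obtain ⟨hba, haO, hbO, hEa, hIoo⟩ := hpair
      obtain ⟨hj1, hmul, hbf, hfa⟩ := hmemJ
      have hbodd := OddSet_odd_mem horth hM hbO
      have hb1 : 1 ≤ b := by rcases hbodd with ⟨t, ht⟩; omega
      have hbmult : Odd (mult f b) := hbO
      obtain ⟨jb, hjb1, hjbM, hjb3⟩ := exists_of_mult hM hb1
        (by rcases hbmult with ⟨t, ht⟩; omega)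
      have hjbJ : jb ∈ Jset f {i | 1 ≤ mult f i ∧ b ≤ i ∧ i ≤ a} := by
        refine ⟨hjb1, ?_⟩
        simp only [Set.mem_setOf_eq, hjb3]
        exact ⟨by rcases hbmult with ⟨t, ht⟩; omega, le_rfl, by omega⟩
      have hjbj : jb ≤ j := hub hjbJ
      have hfj_le : f j ≤ b := by
        have := hmono hjb1 hjbj
        omega
      have hfjb : f j = b := le_antisymm hfj_le hbf
      have hfodd : Odd (f j) := hfjb ▸ hbodd
      have h2 : ∀ k, j < k → f k < b := by
        intro k hkj
        have hle : f k ≤ f j := hmono hj (by omega)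
        rcases lt_or_eq_of_le (show f k ≤ b by omega) with h | h
        · exact h
        · exfalso
          have hkJ : k ∈ Jset f {i | 1 ≤ mult f i ∧ b ≤ i ∧ i ≤ a} := by
            refine ⟨by omega, ?_⟩
            simp only [Set.mem_setOf_eq, h]
            exact ⟨by rcases hbmult with ⟨t, ht⟩; omega, le_rfl, by omega⟩
          have := hub hkJ
          omega
      have hEIci : Even ((OddSet f ∩ Set.Ici b).ncard) := by
        have hsplit := ncard_Ioi_split hOfin hba haO
        rw [hIoo] at hsplit
        simp only [Set.ncard_empty] at hsplit
        rw [ncard_Ici hOfin hbO, hsplit]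
        rcases hEa with ⟨t, ht⟩
        exact ⟨t + 1, by omega⟩
      refine ⟨(greatest_parityO hmono hM hj hb1 hbf h2).mpr hEIci, hfodd, ?_⟩
      intro heq
      have hkJ : j + 1 ∈ Jset f {i | 1 ≤ mult f i ∧ b ≤ i ∧ i ≤ a} := by
        refine ⟨by omega, ?_⟩
        simp only [Set.mem_setOf_eq, heq, hfjb]
        exact ⟨by rcases hbmult with ⟨t, ht⟩; omega, le_rfl, by omega⟩
      have := hub hkJ
      omega
    · obtain ⟨hj1, hfi⟩ := hmemJ
      rw [Set.mem_singleton_iff] at hfi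
      have hi1 : 1 ≤ i := by rcases hiodd with ⟨t, ht⟩; omega
      have hinotO : i ∉ OddSet f := by
        intro hiO
        exact hnocov (covered_of_memG hOfin hOE hiO)
      have h2 : ∀ k, j < k → f k < i := by
        intro k hkj
        have hle : f k ≤ f j := hmono hj (by omega)
        rcases lt_or_eq_of_le (show f k ≤ i by omega) with h | h
        · exact h
        · exfalso
          have hkJ : k ∈ Jset f {i} := ⟨by omega, h⟩
          have := hub hkJ
          omega
      have hEIoi : Even ((OddSet f ∩ Set.Ioi i).ncard) := by
        by_contra hodd
        rw [Nat.not_even_iff_odd] at hodd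
        exact hnocov ((cover_parityG hOfin hOE hinotO).mpr hodd)
      have hEIci : Even ((OddSet f ∩ Set.Ici i).ncard) := by
        rw [OddSet_Ici_of_not_mem hinotO]
        exact hEIoi
      refine ⟨(greatest_parityO hmono hM hj hi1 (le_of_eq hfi.symm) h2).mpr hEIci,
        hfi ▸ hiodd, ?_⟩
      intro heq
      have hkJ : j + 1 ∈ Jset f {i} := ⟨by omega, by rw [Set.mem_singleton_iff, heq, hfi]⟩
      have := hub hkJ
      omega
  · rintro ⟨hjeven, hfodd, hne⟩
    have hf1 : 1 ≤ f j := by rcases hfodd with ⟨t, ht⟩; omega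
    have h2 : ∀ k, j < k → f k < f j := by
      intro k hkj
      have h1 : f k ≤ f (j+1) := hmono (by omega) (by omega)
      have h2' : f (j+1) ≤ f j := hmono hj (by omega)
      omega
    have hEIci : Even ((OddSet f ∩ Set.Ici (f j)).ncard) :=
      (greatest_parityO hmono hM hj hf1 le_rfl h2).mp hjeven
    by_cases hmultb : Odd (mult f (f j))
    · have hbO : f j ∈ OddSet f := hmultb
      have hOIoi : Odd ((OddSet f ∩ Set.Ioi (f j)).ncard) := by
        rw [ncard_Ici hOfin hbO] at hEIci
        rw [Nat.odd_iff]
        rw [Nat.even_iff] at hEIci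
        omega
      obtain ⟨a, hp, hba⟩ := partner_above hOfin hbO hOIoi
      refine ⟨{i | 1 ≤ mult f i ∧ f j ≤ i ∧ i ≤ a},
        Or.inl ⟨a, f j, hp, rfl⟩,
        ⟨hj, by rcases hmultb with ⟨t, ht⟩; omega, le_rfl, le_of_lt hba⟩, ?_⟩
      rintro k ⟨hk1, _, hbfk, _⟩
      by_contra hc
      have := h2 k (by omega)
      omega
    · have hbnotO : f j ∉ OddSet f := hmultb
      have hEIoi : Even ((OddSet f ∩ Set.Ioi (f j)).ncard) := by
        rw [OddSet_Ici_of_not_mem hbnotO] at hEIci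
        exact hEIci
      have hnocov : ¬ ∃ a b, PairedOE f a b ∧ b ≤ f j ∧ f j ≤ a := by
        intro hcov
        have := (cover_parityG hOfin hOE hbnotO).mp hcov
        rw [Nat.odd_iff] at this
        rw [Nat.even_iff] at hEIoi
        omega
      refine ⟨{f j}, Or.inr ⟨f j, hfodd, one_le_mult hM hj hf1, hnocov, rfl⟩,
        ⟨hj, rfl⟩, ?_⟩
      rintro k ⟨hk1, hfk⟩
      rw [Set.mem_singleton_iff] at hfk
      by_contra hc
      have := h2 k (by omega)
      omega

end C34

section Align
variable {f : ℕ → ℕ} {M : ℕ}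

lemma OddSet_even_total (hmono : ∀ ⦃j k : ℕ⦄, 1 ≤ j → j ≤ k → f k ≤ f j)
    (hM : ∀ j, M < j → f j = 0) (horth : Orth f) {n : ℕ}
    (htot : ∑ j ∈ Finset.Icc 1 M, f j = 2*n) : Even (OddSet f).ncard := by
  have h1 : Even (∑ j ∈ Finset.Icc 1 M, f j) := ⟨n, by omega⟩
  rw [Finset.even_sum_iff_even_card_odd] at h1
  have hfib : ((Finset.Icc 1 M).filter (fun k => Odd (f k))).card
      = ∑ i ∈ (Finset.Icc 1 (f 1)).filter (fun i => Odd i), mult f i := by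
    rw [Finset.card_eq_sum_card_fiberwise (f := f)
      (t := (Finset.Icc 1 (f 1)).filter (fun i => Odd i)) ?_]
    · refine Finset.sum_congr rfl ?_
      intro i hi
      simp only [Finset.mem_filter, Finset.mem_Icc] at hi
      rw [mult_eq_card hM hi.1.1]
      congr 1
      rw [Finset.filter_filter]
      apply Finset.filter_congr
      intro k _
      constructor
      · rintro ⟨_, h⟩; exact h
      · rintro rfl; exact ⟨hi.2, rfl⟩
    · intro k hk
      simp only [Finset.mem_coe, Finset.mem_filter, Finset.mem_Icc] at hk ⊢
      have h2 : 1 ≤ f k := by rcases hk.2 with ⟨t, ht⟩; omega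
      exact ⟨⟨h2, hmono le_rfl hk.1.1⟩, hk.2⟩
  rw [hfib, Finset.even_sum_iff_even_card_odd] at h1
  have hset : OddSet f
      = ↑(((Finset.Icc 1 (f 1)).filter (fun i => Odd i)).filter
          (fun i => Odd (mult f i))) := by
    ext i
    simp only [OddSet, Set.mem_setOf_eq, Finset.coe_filter, Finset.mem_filter, Finset.mem_Icc,
      Finset.mem_coe]
    constructor
    · intro h
      have hpos : 1 ≤ mult f i := by rcases h with ⟨t, ht⟩; omega
      have hi1 : 1 ≤ i := by
        by_contra hc
        have h0 : i = 0 := by omega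
        rw [h0, mult_zero hM] at h
        exact (by decide : ¬ Odd 0) h
      obtain ⟨j, hj1, _, hj3⟩ := exists_of_mult hM hi1 hpos
      have hle : f j ≤ f 1 := hmono le_rfl hj1
      refine ⟨⟨⟨hi1, by omega⟩, ?_⟩, h⟩
      by_contra hc
      rw [Nat.not_odd_iff_even] at hc
      have h2 := horth i hc hi1
      rw [Nat.even_iff] at h2
      have h' : Odd (mult f i) := h
      rw [Nat.odd_iff] at h'
      omega
    · rintro ⟨_, h⟩; exact h
  rw [hset, Set.ncard_coe_finset]
  exact h1

lemma prev_run (hmono : ∀ ⦃j k : ℕ⦄, 1 ≤ j → j ≤ k → f k ≤ f j)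
    (hM : ∀ j, M < j → f j = 0) {x : ℕ} (hx : 2 ≤ x) (hne : f (x-1) ≠ f x) :
    ∃ z, 1 ≤ z ∧ z < x ∧ f z = f (x-1) ∧ (z = 1 ∨ f (z-1) ≠ f z) ∧
      x = z + mult f (f (x-1)) := by
  have hgt : f x < f (x-1) := by
    have := hmono (show 1 ≤ x - 1 by omega) (show x - 1 ≤ x by omega)
    omega
  have hw1 : 1 ≤ f (x-1) := by omega
  set w := f (x-1) with hw
  have hsetne : ({j | 1 ≤ j ∧ f j ≤ w} : Set ℕ).Nonempty := ⟨x - 1, by omega, le_rfl⟩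
  set z := sInf {j | 1 ≤ j ∧ f j ≤ w} with hz
  have hzmem : z ∈ {j | 1 ≤ j ∧ f j ≤ w} := Nat.sInf_mem hsetne
  have hz1 : 1 ≤ z := hzmem.1
  have hzle : z ≤ x - 1 := Nat.sInf_le ⟨by omega, le_rfl⟩
  have hfz : f z = w := by
    have h1 : w ≤ f z := by
      have := hmono hz1 hzle
      omega
    have h2 : f z ≤ w := hzmem.2
    omega
  have hstart : z = 1 ∨ f (z-1) ≠ f z := by
    by_cases hz1' : z = 1
    · exact Or.inl hz1'
    · refine Or.inr ?_
      intro heq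
      have : z - 1 ∈ {j | 1 ≤ j ∧ f j ≤ w} := ⟨by omega, by rw [heq, hfz]⟩
      have := Nat.sInf_le this
      omega
  have hfil : (Finset.Icc 1 M).filter (fun k => f k = w) = Finset.Icc z (x-1) := by
    ext k
    simp only [Finset.mem_filter, Finset.mem_Icc]
    constructor
    · rintro ⟨⟨hk1, hkM⟩, hkw⟩
      refine ⟨Nat.sInf_le ⟨hk1, le_of_eq hkw⟩, ?_⟩
      by_contra hc
      have : f k ≤ f x := hmono (show 1 ≤ x by omega) (by omega)
      omega
    · rintro ⟨hzk, hkx⟩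
      have hk1 : 1 ≤ k := by omega
      have h1 : f k ≤ f z := hmono hz1 hzk
      have h2 : w ≤ f k := by
        have := hmono hk1 (show k ≤ x - 1 by omega)
        omega
      have hkw : f k = w := by omega
      refine ⟨⟨hk1, ?_⟩, hkw⟩
      by_contra hc
      have := hM k (by omega)
      omega
  have hmult : mult f w = x - z := by
    rw [mult_eq_card hM hw1, hfil, Nat.card_Icc]
    omega
  exact ⟨z, hz1, by omega, hfz.symm ▸ rfl, hstart, by omega⟩

lemma align_odd (hmono : ∀ ⦃j k : ℕ⦄, 1 ≤ j → j ≤ k → f k ≤ f j)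
    (hM : ∀ j, M < j → f j = 0) (hsymp : Symp f) (hsp : SpecialPairs f) :
    ∀ x, 1 ≤ x → Odd (f x) → (x = 1 ∨ f (x-1) ≠ f x) → Odd x := by
  intro x
  induction x using Nat.strong_induction_on with
  | _ x IH =>
    intro hx1 hodd hstart
    by_cases hx1' : x = 1
    · subst hx1'; exact odd_one
    · have hx2 : 2 ≤ x := by omega
      have hne : f (x-1) ≠ f x := by
        rcases hstart with h | h
        · omega
        · exact h
      by_cases hprev : Odd (f (x-1))
      · obtain ⟨z, hz1, hzx, hfz, hzstart, hxeq⟩ := prev_run hmono hM hx2 hne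
        have hzodd : Odd z := IH z hzx hz1 (by rw [hfz]; exact hprev) hzstart
        have hmeven : Even (mult f (f (x-1))) := hsymp _ hprev
        rcases hzodd with ⟨t, ht⟩
        rcases hmeven with ⟨s, hs⟩
        exact ⟨t + s, by omega⟩
      · rw [Nat.not_odd_iff_even] at hprev
        by_contra hxodd
        rw [Nat.not_odd_iff_even] at hxodd
        obtain ⟨i, hi⟩ := hxodd
        have hi1 : 1 ≤ i := by omega
        have hblock := hsp i hi1
        rw [show 2*i = x by omega] at hblock
        rw [Nat.even_iff] at hprev
        rw [Nat.odd_iff] at hodd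
        omega

lemma align_even (hmono : ∀ ⦃j k : ℕ⦄, 1 ≤ j → j ≤ k → f k ≤ f j)
    (hM : ∀ j, M < j → f j = 0) (horth : Orth f) (hsp : SpecialPairs f) :
    ∀ x, 1 ≤ x → Even (f x) → (x = 1 ∨ f (x-1) ≠ f x) → Odd x := by
  intro x
  induction x using Nat.strong_induction_on with
  | _ x IH =>
    intro hx1 heven hstart
    by_cases hx1' : x = 1
    · subst hx1'; exact odd_one
    · have hx2 : 2 ≤ x := by omega
      have hne : f (x-1) ≠ f x := by
        rcases hstart with h | h
        · omega
        · exact h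
      by_cases hprev : Even (f (x-1))
      · obtain ⟨z, hz1, hzx, hfz, hzstart, hxeq⟩ := prev_run hmono hM hx2 hne
        have hzodd : Odd z := IH z hzx hz1 (by rw [hfz]; exact hprev) hzstart
        have hw1 : 1 ≤ f (x-1) := by
          have := hmono (show 1 ≤ x - 1 by omega) (show x - 1 ≤ x by omega)
          omega
        have hmeven : Even (mult f (f (x-1))) := horth _ hprev hw1
        rcases hzodd with ⟨t, ht⟩
        rcases hmeven with ⟨s, hs⟩
        exact ⟨t + s, by omega⟩
      · rw [Nat.not_even_iff_odd] at hprev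
        by_contra hxodd
        rw [Nat.not_odd_iff_even] at hxodd
        obtain ⟨i, hi⟩ := hxodd
        have hi1 : 1 ≤ i := by omega
        have hblock := hsp i hi1
        rw [show 2*i = x by omega] at hblock
        rw [Nat.odd_iff] at hprev
        rw [Nat.even_iff] at heven
        omega

lemma value_run (hmono : ∀ ⦃j k : ℕ⦄, 1 ≤ j → j ≤ k → f k ≤ f j)
    (hM : ∀ j, M < j → f j = 0) {w : ℕ} (hw : 1 ≤ w) {j0 : ℕ} (hj0 : 1 ≤ j0)
    (hj0w : f j0 = w) :
    ∃ x y, 1 ≤ x ∧ x ≤ y ∧ (∀ k, (1 ≤ k ∧ f k = w) ↔ (x ≤ k ∧ k ≤ y)) ∧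
      mult f w = y + 1 - x ∧ (x = 1 ∨ f (x-1) ≠ f x) ∧ f x = w := by
  have hsub : {j | 1 ≤ j ∧ f j = w} ⊆ Set.Icc 1 M := by
    rintro k ⟨hk1, hkw⟩
    refine ⟨hk1, ?_⟩
    by_contra hc
    have := hM k (by omega)
    omega
  have hfin : ({j | 1 ≤ j ∧ f j = w} : Set ℕ).Finite :=
    (Set.finite_Icc 1 M).subset hsub
  have hne : ({j | 1 ≤ j ∧ f j = w} : Set ℕ).Nonempty := ⟨j0, hj0, hj0w⟩
  set x := sInf {j | 1 ≤ j ∧ f j = w} with hx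
  set y := sSup {j | 1 ≤ j ∧ f j = w} with hy
  have hxmem : x ∈ {j | 1 ≤ j ∧ f j = w} := Nat.sInf_mem hne
  have hymem : y ∈ {j | 1 ≤ j ∧ f j = w} := Nat.sSup_mem hne hfin.bddAbove
  have hxy : x ≤ y := Nat.sInf_le hymem
  have hiff : ∀ k, (1 ≤ k ∧ f k = w) ↔ (x ≤ k ∧ k ≤ y) := by
    intro k
    constructor
    · intro hk
      exact ⟨Nat.sInf_le hk, le_csSup hfin.bddAbove hk⟩
    · rintro ⟨hxk, hky⟩
      have hk1 : 1 ≤ k := le_trans hxmem.1 hxk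
      have h1 : f k ≤ f x := hmono hxmem.1 hxk
      have h2 : f y ≤ f k := hmono hk1 hky
      rw [hxmem.2] at h1
      rw [hymem.2] at h2
      exact ⟨hk1, by omega⟩
  have hfil : (Finset.Icc 1 M).filter (fun k => f k = w) = Finset.Icc x y := by
    ext k
    simp only [Finset.mem_filter, Finset.mem_Icc]
    constructor
    · rintro ⟨⟨hk1, hkM⟩, hkw⟩
      exact (hiff k).mp ⟨hk1, hkw⟩
    · rintro ⟨hxk, hky⟩
      obtain ⟨hk1, hkw⟩ := (hiff k).mpr ⟨hxk, hky⟩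
      refine ⟨⟨hk1, ?_⟩, hkw⟩
      by_contra hc
      have := hM k (by omega)
      omega
  have hmult : mult f w = y + 1 - x := by
    rw [mult_eq_card hM hw, hfil, Nat.card_Icc]
  have hx1 : 1 ≤ x := hxmem.1
  have hstart : x = 1 ∨ f (x-1) ≠ f x := by
    by_cases hx1' : x = 1
    · exact Or.inl hx1'
    · refine Or.inr ?_
      intro heq
      have hm : x - 1 ∈ {j | 1 ≤ j ∧ f j = w} := ⟨by omega, by rw [heq, hxmem.2]⟩
      have hle := Nat.sInf_le hm
      omega
  exact ⟨x, y, hx1, hxy, hiff, hmult, hstart, hxmem.2⟩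

end Align

section XiFormula
variable {f1 f2 : ℕ → ℕ} {M : ℕ}

lemma xi_odd_eq (hmono1 : ∀ ⦃j k : ℕ⦄, 1 ≤ j → j ≤ k → f1 k ≤ f1 j)
    (hM1 : ∀ j, M < j → f1 j = 0) (h1s : Symp f1)
    (hmono2 : ∀ ⦃j k : ℕ⦄, 1 ≤ j → j ≤ k → f2 k ≤ f2 j)
    (hM2 : ∀ j, M < j → f2 j = 0) (h2o : Orth f2) (hOE : Even (OddSet f2).ncard)
    {j : ℕ} (hj : 1 ≤ j) (hodd : Odd j) :
    xi f1 f2 j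
      = if Even (f1 j) ∧ Odd (f2 j) ∧ (j = 1 ∨ f1 (j-1) + f2 (j-1) ≠ f1 j + f2 j)
        then 1 else 0 := by
  by_cases hP : Even (f1 j) ∧ Odd (f2 j)
  · by_cases hcond : j = 1 ∨ f1 (j-1) + f2 (j-1) ≠ f1 j + f2 j
    · have hmem : j ∈ JplusSet f1 f2 := by
        refine ⟨hj, hP.1, hP.2, ?_⟩
        by_cases hj1 : j = 1
        · exact Or.inl ((minS_iff hmono1 hM1 h1s hj).mpr ⟨hodd, hP.1, Or.inl hj1⟩)
        · have hne : f1 (j-1) + f2 (j-1) ≠ f1 j + f2 j := by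
            rcases hcond with h | h
            · exact absurd h hj1
            · exact h
          by_cases hf1 : f1 (j-1) = f1 j
          · have hf2 : f2 (j-1) ≠ f2 j := by omega
            exact Or.inr ((minOE_iff hmono2 hM2 h2o hOE hj).mpr ⟨hodd, hP.2, Or.inr hf2⟩)
          · exact Or.inl ((minS_iff hmono1 hM1 h1s hj).mpr ⟨hodd, hP.1, Or.inr hf1⟩)
      simp only [xi]
      rw [if_pos hmem, if_pos ⟨hP.1, hP.2, hcond⟩]
    · push_neg at hcond
      obtain ⟨hj1, hFeq⟩ := hcond
      have hj2 : 2 ≤ j := by omega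
      have hf1le : f1 j ≤ f1 (j-1) := hmono1 (by omega) (by omega)
      have hf2le : f2 j ≤ f2 (j-1) := hmono2 (by omega) (by omega)
      have hf1eq : f1 (j-1) = f1 j := by omega
      have hf2eq : f2 (j-1) = f2 j := by omega
      have hnp : j ∉ JplusSet f1 f2 := by
        rintro ⟨_, _, _, hm | hm⟩
        · obtain ⟨_, _, h3⟩ := (minS_iff hmono1 hM1 h1s hj).mp hm
          rcases h3 with h | h
          · omega
          · exact h hf1eq
        · obtain ⟨_, _, h3⟩ := (minOE_iff hmono2 hM2 h2o hOE hj).mp hm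
          rcases h3 with h | h
          · omega
          · exact h hf2eq
      have hnm : j ∉ JminusSet f1 f2 := by
        rintro ⟨_, _, _, hm | hm⟩
        · obtain ⟨h1, _⟩ := (maxS_iff hmono1 hM1 h1s hj).mp hm
          rw [Nat.even_iff] at h1
          rw [Nat.odd_iff] at hodd
          omega
        · obtain ⟨h1, _⟩ := (maxOE_iff hmono2 hM2 h2o hOE hj).mp hm
          rw [Nat.even_iff] at h1
          rw [Nat.odd_iff] at hodd
          omega
      simp only [xi]
      rw [if_neg hnp, if_neg hnm, if_neg (by
        rintro ⟨_, _, hc⟩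
        rcases hc with h | h
        · omega
        · exact h hFeq)]
  · have hnp : j ∉ JplusSet f1 f2 := by
      rintro ⟨_, hE, hO, _⟩
      exact hP ⟨hE, hO⟩
    have hnm : j ∉ JminusSet f1 f2 := by
      rintro ⟨_, hE, hO, _⟩
      exact hP ⟨hE, hO⟩
    simp only [xi]
    rw [if_neg hnp, if_neg hnm, if_neg (by
      rintro ⟨hE, hO, _⟩
      exact hP ⟨hE, hO⟩)]

lemma xi_even_eq (hmono1 : ∀ ⦃j k : ℕ⦄, 1 ≤ j → j ≤ k → f1 k ≤ f1 j)
    (hM1 : ∀ j, M < j → f1 j = 0) (h1s : Symp f1)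
    (hmono2 : ∀ ⦃j k : ℕ⦄, 1 ≤ j → j ≤ k → f2 k ≤ f2 j)
    (hM2 : ∀ j, M < j → f2 j = 0) (h2o : Orth f2) (hOE : Even (OddSet f2).ncard)
    {j : ℕ} (hj : 1 ≤ j) (heven : Even j) :
    xi f1 f2 j
      = if Even (f1 j) ∧ Odd (f2 j) ∧ f1 (j+1) + f2 (j+1) ≠ f1 j + f2 j
        then -1 else 0 := by
  have hnp : j ∉ JplusSet f1 f2 := by
    rintro ⟨_, _, _, hm | hm⟩
    · obtain ⟨h1, _⟩ := (minS_iff hmono1 hM1 h1s hj).mp hm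
      rw [Nat.odd_iff] at h1
      rw [Nat.even_iff] at heven
      omega
    · obtain ⟨h1, _⟩ := (minOE_iff hmono2 hM2 h2o hOE hj).mp hm
      rw [Nat.odd_iff] at h1
      rw [Nat.even_iff] at heven
      omega
  by_cases hP : Even (f1 j) ∧ Odd (f2 j)
  · by_cases hcond : f1 (j+1) + f2 (j+1) ≠ f1 j + f2 j
    · have hf1le : f1 (j+1) ≤ f1 j := hmono1 hj (by omega)
      have hf2le : f2 (j+1) ≤ f2 j := hmono2 hj (by omega)
      have hmem : j ∈ JminusSet f1 f2 := by
        refine ⟨hj, hP.1, hP.2, ?_⟩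
        by_cases hf1 : f1 (j+1) = f1 j
        · have hf2 : f2 (j+1) ≠ f2 j := by omega
          exact Or.inr ((maxOE_iff hmono2 hM2 h2o hOE hj).mpr ⟨heven, hP.2, hf2⟩)
        · have h2f1 : 2 ≤ f1 j := by
            rcases hP.1 with ⟨t, ht⟩
            omega
          exact Or.inl ((maxS_iff hmono1 hM1 h1s hj).mpr ⟨heven, hP.1, h2f1, hf1⟩)
      simp only [xi]
      rw [if_neg hnp, if_pos hmem, if_pos ⟨hP.1, hP.2, hcond⟩]
    · push_neg at hcond
      have hf1le : f1 (j+1) ≤ f1 j := hmono1 hj (by omega)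
      have hf2le : f2 (j+1) ≤ f2 j := hmono2 hj (by omega)
      have hf1eq : f1 (j+1) = f1 j := by omega
      have hf2eq : f2 (j+1) = f2 j := by omega
      have hnm : j ∉ JminusSet f1 f2 := by
        rintro ⟨_, _, _, hm | hm⟩
        · obtain ⟨_, _, _, h4⟩ := (maxS_iff hmono1 hM1 h1s hj).mp hm
          exact h4 hf1eq
        · obtain ⟨_, _, h3⟩ := (maxOE_iff hmono2 hM2 h2o hOE hj).mp hm
          exact h3 hf2eq
      simp only [xi]
      rw [if_neg hnp, if_neg hnm, if_neg (by
        rintro ⟨_, _, hc⟩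
        omega)]
  · have hnm : j ∉ JminusSet f1 f2 := by
      rintro ⟨_, hE, hO, _⟩
      exact hP ⟨hE, hO⟩
    simp only [xi]
    rw [if_neg hnp, if_neg hnm, if_neg (by
      rintro ⟨hE, hO, _⟩
      exact hP ⟨hE, hO⟩)]

lemma xi_notP_eq {j : ℕ} (hP : ¬ (1 ≤ j ∧ Even (f1 j) ∧ Odd (f2 j))) :
    xi f1 f2 j = 0 := by
  have hnp : j ∉ JplusSet f1 f2 := by
    rintro ⟨h1, hE, hO, _⟩
    exact hP ⟨h1, hE, hO⟩
  have hnm : j ∉ JminusSet f1 f2 := by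
    rintro ⟨h1, hE, hO, _⟩
    exact hP ⟨h1, hE, hO⟩
  simp only [xi]
  rw [if_neg hnp, if_neg hnm]

end XiFormula

lemma ncard_Icc_nat (a b : ℕ) : (Set.Icc a b).ncard = b + 1 - a := by
  rw [← Finset.coe_Icc, Set.ncard_coe_finset, Nat.card_Icc]

lemma S_tail_ext (f : ℕ → ℕ) {m m' : ℕ} (hle : m ≤ m') (h0 : ∀ j, m < j → f j = 0) :
    S f m' = S f m := by
  refine (Finset.sum_subset (Finset.Icc_subset_Icc_right hle) ?_).symm
  intro x hx hnx
  simp only [Finset.mem_Icc] at hx hnx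
  exact h0 x (by omega)


/-- Section 1.9: `ind(λ1, λ2) = λ1 + λ2 + ξ` is a (nonincreasing) symplectic
partition of `2(n1+n2)`. -/
theorem stmt7 (n1 n2 : ℕ)
    (f1 : ℕ → ℕ) (h1 : IsPartition f1 (2*n1)) (h1s : Symp f1) (h1sp : SpecialPairs f1)
    (f2 : ℕ → ℕ) (h2 : IsPartition f2 (2*n2)) (h2o : Orth f2) (h2sp : SpecialPairs f2) :
    ∃ g : ℕ → ℕ,
      (∀ j, 1 ≤ j → (g j : ℤ) = (f1 j : ℤ) + (f2 j : ℤ) + xi f1 f2 j) ∧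
      IsPartition g (2*(n1+n2)) ∧ Symp g := by

  classical
  obtain ⟨m1, hm1⟩ := h1.fin
  obtain ⟨m2, hm2⟩ := h2.fin
  set M := max m1 m2 with hMdef
  have hM1 : ∀ j, M < j → f1 j = 0 := fun j hj => hm1 j (by omega)
  have hM2 : ∀ j, M < j → f2 j = 0 := fun j hj => hm2 j (by omega)
  have hmono1 := h1.mono
  have hmono2 := h2.mono
  have hOE : Even (OddSet f2).ncard :=
    OddSet_even_total hmono2 hM2 h2o (n := n2) (h2.total M hM2)
  have hxiO : ∀ {j : ℕ}, 1 ≤ j → Odd j → xi f1 f2 j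
      = if Even (f1 j) ∧ Odd (f2 j) ∧ (j = 1 ∨ f1 (j-1) + f2 (j-1) ≠ f1 j + f2 j)
        then 1 else 0 :=
    fun hj hodd => xi_odd_eq hmono1 hM1 h1s hmono2 hM2 h2o hOE hj hodd
  have hxiE : ∀ {j : ℕ}, 1 ≤ j → Even j → xi f1 f2 j
      = if Even (f1 j) ∧ Odd (f2 j) ∧ f1 (j+1) + f2 (j+1) ≠ f1 j + f2 j
        then -1 else 0 :=
    fun hj he => xi_even_eq hmono1 hM1 h1s hmono2 hM2 h2o hOE hj he
  set g : ℕ → ℕ := fun j => ((f1 j : ℤ) + (f2 j : ℤ) + xi f1 f2 j).toNat with hgdef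
  have hgval : ∀ j, 1 ≤ j → (g j : ℤ) = (f1 j : ℤ) + (f2 j : ℤ) + xi f1 f2 j := by
    intro j hj
    rw [hgdef]
    simp only []
    rw [Int.toNat_of_nonneg]
    rcases Nat.even_or_odd j with he | ho
    · rw [hxiE hj he]
      split_ifs with h
      · obtain ⟨_, hO, _⟩ := h
        rw [Nat.odd_iff] at hO
        omega
      · omega
    · rw [hxiO hj ho]
      split_ifs <;> omega
  -- monotonicity
  have hadj : ∀ j, 1 ≤ j → g (j+1) ≤ g j := by
    intro j hj
    have h1le : f1 (j+1) ≤ f1 j := hmono1 hj (by omega)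
    have h2le : f2 (j+1) ≤ f2 j := hmono2 hj (by omega)
    have hcast : (g (j+1) : ℤ) ≤ (g j : ℤ) := by
      rw [hgval j hj, hgval (j+1) (by omega)]
      rcases Nat.even_or_odd j with he | ho
      · rw [hxiE hj he, hxiO (by omega) (Even.add_one he)]
        simp only [Nat.add_sub_cancel]
        by_cases hA : Even (f1 j) ∧ Odd (f2 j) ∧ f1 (j+1) + f2 (j+1) ≠ f1 j + f2 j
        · rw [if_pos hA]
          by_cases hB : Even (f1 (j+1)) ∧ Odd (f2 (j+1))
              ∧ (j+1 = 1 ∨ f1 j + f2 j ≠ f1 (j+1) + f2 (j+1))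
          · rw [if_pos hB]
            obtain ⟨hE1, hO1, _⟩ := hA
            obtain ⟨hE2, hO2, _⟩ := hB
            rw [Nat.even_iff] at hE1 hE2
            rw [Nat.odd_iff] at hO1 hO2
            omega
          · rw [if_neg hB]
            obtain ⟨_, _, h⟩ := hA
            omega
        · rw [if_neg hA]
          by_cases hB : Even (f1 (j+1)) ∧ Odd (f2 (j+1))
              ∧ (j+1 = 1 ∨ f1 j + f2 j ≠ f1 (j+1) + f2 (j+1))
          · rw [if_pos hB]
            obtain ⟨_, _, hc⟩ := hB
            have hne : f1 j + f2 j ≠ f1 (j+1) + f2 (j+1) :=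
              hc.elim (fun h => by omega) (fun h => h)
            omega
          · rw [if_neg hB]
            omega
      · rw [hxiO hj ho, hxiE (by omega) (Odd.add_one ho)]
        split_ifs <;> omega
    exact_mod_cast hcast
  have hmonog : ∀ ⦃j k : ℕ⦄, 1 ≤ j → j ≤ k → g k ≤ g j := by
    intro j k hj hjk
    obtain ⟨d, rfl⟩ : ∃ d, k = j + d := ⟨k - j, by omega⟩
    clear hjk
    induction d with
    | zero => exact le_rfl
    | succ d IH => exact le_trans (by exact hadj (j+d) (by omega)) IH
  -- tail
  have hgtail : ∀ j, M < j → g j = 0 := by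
    intro j hjM
    have hj1 : 1 ≤ j := by omega
    have hxi0 : xi f1 f2 j = 0 := by
      apply xi_notP_eq
      rintro ⟨_, _, hO⟩
      rw [hM2 j hjM] at hO
      exact (by decide : ¬ Odd 0) hO
    rw [hgdef]
    simp only [hM1 j hjM, hM2 j hjM, hxi0]
    rfl
  -- pair identity
  have hpair : ∀ j, 1 ≤ j → Even j →
      xi f1 f2 j + xi f1 f2 (j+1)
        = (if Even (f1 (j+1)) ∧ Odd (f2 (j+1)) then 1 else 0)
          - (if Even (f1 j) ∧ Odd (f2 j) then 1 else 0) := by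
    intro j hj he
    have h1le : f1 (j+1) ≤ f1 j := hmono1 hj (by omega)
    have h2le : f2 (j+1) ≤ f2 j := hmono2 hj (by omega)
    rw [hxiE hj he, hxiO (by omega) (Even.add_one he)]
    simp only [Nat.add_sub_cancel]
    by_cases hFeq : f1 (j+1) + f2 (j+1) = f1 j + f2 j
    · have hf1eq : f1 (j+1) = f1 j := by omega
      have hf2eq : f2 (j+1) = f2 j := by omega
      have hPiff : (Even (f1 (j+1)) ∧ Odd (f2 (j+1))) ↔ (Even (f1 j) ∧ Odd (f2 j)) := by
        rw [hf1eq, hf2eq]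
      rw [if_neg (by rintro ⟨_, _, h⟩; exact h hFeq),
        if_neg (by rintro ⟨_, _, hc⟩; exact hc.elim (fun h => by omega) (fun h => h hFeq.symm)),
        if_congr hPiff rfl rfl, sub_self]
      norm_num
    · by_cases hPj : Even (f1 j) ∧ Odd (f2 j) <;>
        by_cases hPj1 : Even (f1 (j+1)) ∧ Odd (f2 (j+1))
      · rw [if_pos ⟨hPj.1, hPj.2, hFeq⟩,
          if_pos ⟨hPj1.1, hPj1.2, Or.inr (by omega)⟩, if_pos hPj1, if_pos hPj]
        norm_num
      · rw [if_pos ⟨hPj.1, hPj.2, hFeq⟩,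
          if_neg (by rintro ⟨hE, hO, _⟩; exact hPj1 ⟨hE, hO⟩),
          if_neg hPj1, if_pos hPj]
        norm_num
      · rw [if_neg (by rintro ⟨hE, hO, _⟩; exact hPj ⟨hE, hO⟩),
          if_pos ⟨hPj1.1, hPj1.2, Or.inr (by omega)⟩, if_pos hPj1, if_neg hPj]
        norm_num
      · rw [if_neg (by rintro ⟨hE, hO, _⟩; exact hPj ⟨hE, hO⟩),
          if_neg (by rintro ⟨hE, hO, _⟩; exact hPj1 ⟨hE, hO⟩),
          if_neg hPj1, if_neg hPj]
        norm_num
  -- telescoping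
  have hSzodd : ∀ K : ℕ, Sz (xi f1 f2) (2*K+1)
      = (if Even (f1 (2*K+1)) ∧ Odd (f2 (2*K+1)) then 1 else 0) := by
    intro K
    induction K with
    | zero =>
      have h0 : Sz (xi f1 f2) 1 = xi f1 f2 1 := by
        rw [Sz, Finset.Icc_self, Finset.sum_singleton]
      rw [show 2*0+1 = 1 by norm_num, h0, hxiO le_rfl odd_one]
      by_cases hP : Even (f1 1) ∧ Odd (f2 1)
      · rw [if_pos ⟨hP.1, hP.2, Or.inl rfl⟩, if_pos hP]
      · rw [if_neg (by rintro ⟨hE, hO, _⟩; exact hP ⟨hE, hO⟩), if_neg hP]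
    | succ K IH =>
      have e1 : Sz (xi f1 f2) (2*K+2) = Sz (xi f1 f2) (2*K+1) + xi f1 f2 (2*K+2) := by
        rw [Sz, Sz, show 2*K+2 = (2*K+1)+1 by ring, Finset.sum_Icc_succ_top (by omega)]
      have e2 : Sz (xi f1 f2) (2*K+3) = Sz (xi f1 f2) (2*K+2) + xi f1 f2 (2*K+3) := by
        rw [Sz, Sz, show 2*K+3 = (2*K+2)+1 by ring, Finset.sum_Icc_succ_top (by omega)]
      have hpr := hpair (2*K+2) (by omega) (by exact ⟨K+1, by ring⟩)
      have hblock : (Even (f1 (2*K+2)) ∧ Odd (f2 (2*K+2)))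
          ↔ (Even (f1 (2*K+1)) ∧ Odd (f2 (2*K+1))) := by
        have hb1 := h1sp (K+1) (by omega)
        have hb2 := h2sp (K+1) (by omega)
        rw [show 2*(K+1) = 2*K+2 by ring, show 2*K+2-1 = 2*K+1 by omega] at hb1 hb2
        constructor
        · rintro ⟨hE, hO⟩
          rw [Nat.even_iff] at hE ⊢
          rw [Nat.odd_iff] at hO ⊢
          omega
        · rintro ⟨hE, hO⟩
          rw [Nat.even_iff] at hE ⊢
          rw [Nat.odd_iff] at hO ⊢
          omega
      rw [show 2*(K+1)+1 = 2*K+3 by ring, e2, e1, IH]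
      rw [show (2*K+2)+1 = 2*K+3 by ring] at hpr
      rw [add_assoc, hpr, if_congr hblock rfl rfl]
      ring
  -- total
  have htotal : ∀ m, (∀ j, m < j → g j = 0) → S g m = 2*(n1+n2) := by
    intro m hm
    set W := 2*(m+M)+1 with hWdef
    have hWm : m ≤ W := by omega
    have hWM : M ≤ W := by omega
    have hgm : S g W = S g m := S_tail_ext g hWm hm
    have hcast : (S g W : ℤ) = (S f1 W : ℤ) + (S f2 W : ℤ) + Sz (xi f1 f2) W := by
      rw [S, S, S, Sz]
      push_cast
      rw [← Finset.sum_add_distrib, ← Finset.sum_add_distrib]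
      refine Finset.sum_congr rfl ?_
      intro j hj
      simp only [Finset.mem_Icc] at hj
      exact hgval j hj.1
    have hS1 : S f1 W = 2*n1 := h1.total W (fun j hj => hM1 j (by omega))
    have hS2 : S f2 W = 2*n2 := h2.total W (fun j hj => hM2 j (by omega))
    have hSzW : Sz (xi f1 f2) W = 0 := by
      rw [hWdef, hSzodd (m+M)]
      rw [if_neg ?_]
      rintro ⟨_, hO⟩
      rw [hM2 (2*(m+M)+1) (by omega)] at hO
      exact (by decide : ¬ Odd 0) hO
    rw [hgm, hS1, hS2, hSzW] at hcast
    have : (S g m : ℤ) = 2*(n1+n2) := by rw [hcast]; push_cast; ring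
    exact_mod_cast this
  have hsympg : Symp g := by
    intro v hv
    have hvodd : v % 2 = 1 := Nat.odd_iff.mp hv
    have hEdesc : {j : ℕ | 1 ≤ j ∧ g j = v}
        = {j : ℕ | 1 ≤ j ∧ f1 j + f2 j = v ∧ xi f1 f2 j = 0} := by
      ext j
      simp only [Set.mem_setOf_eq]
      constructor
      · rintro ⟨hj1, hgv⟩
        by_cases hxi : xi f1 f2 j = 0
        · refine ⟨hj1, ?_, hxi⟩
          have hc := hgval j hj1
          rw [hgv, hxi] at hc
          omega
        · exfalso
          have hc := hgval j hj1
          rw [hgv] at hc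
          rcases Nat.even_or_odd j with he | ho
          · rw [hxiE hj1 he] at hc hxi
            split_ifs at hc hxi with hcond
            · obtain ⟨hE, hO, _⟩ := hcond
              rw [Nat.even_iff] at hE
              rw [Nat.odd_iff] at hO
              omega
            · exact hxi rfl
          · rw [hxiO hj1 ho] at hc hxi
            split_ifs at hc hxi with hcond
            · obtain ⟨hE, hO, _⟩ := hcond
              rw [Nat.even_iff] at hE
              rw [Nat.odd_iff] at hO
              omega
            · exact hxi rfl
      · rintro ⟨hj1, hF, hxi⟩
        refine ⟨hj1, ?_⟩
        have hc := hgval j hj1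
        rw [hxi] at hc
        omega
    simp only [mult]
    rw [hEdesc]
    by_cases hex : ∃ j0, 1 ≤ j0 ∧ f1 j0 + f2 j0 = v
    swap
    · have hempty : {j : ℕ | 1 ≤ j ∧ f1 j + f2 j = v ∧ xi f1 f2 j = 0} = ∅ := by
        ext j
        simp only [Set.mem_setOf_eq, Set.mem_empty_iff_false, iff_false]
        rintro ⟨hj1, hF, _⟩
        exact hex ⟨j, hj1, hF⟩
      rw [hempty, Set.ncard_empty]
      exact Even.zero
    · obtain ⟨j0, hj01, hj0v⟩ := hex
      have hv1 : 1 ≤ v := by omega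
      have hmonoF : ∀ ⦃j k : ℕ⦄, 1 ≤ j → j ≤ k →
          (fun j => f1 j + f2 j) k ≤ (fun j => f1 j + f2 j) j :=
        fun j k hj hjk => Nat.add_le_add (hmono1 hj hjk) (hmono2 hj hjk)
      have hMF : ∀ j, M < j → (fun j => f1 j + f2 j) j = 0 := fun j hj => by
        simp only [hM1 j hj, hM2 j hj]
      obtain ⟨x, y, hx1, hxy, hiff0, _, hstart0, hFx0⟩ :=
        value_run (f := fun j => f1 j + f2 j) hmonoF hMF hv1 hj01 hj0v
      have hiff' : ∀ k, (1 ≤ k ∧ f1 k + f2 k = v) ↔ (x ≤ k ∧ k ≤ y) := hiff0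
      have hFx' : f1 x + f2 x = v := hFx0
      have hxstart : x = 1 ∨ f1 (x-1) + f2 (x-1) ≠ v := by
        rcases hstart0 with h | h
        · exact Or.inl h
        · refine Or.inr ?_
          intro hc
          exact h (by simpa using (by omega : f1 (x-1) + f2 (x-1) = f1 x + f2 x))
      have hconst : ∀ k, x ≤ k → k ≤ y → f1 k = f1 x ∧ f2 k = f2 x := by
        intro k hxk hky
        have hFk : f1 k + f2 k = v := ((hiff' k).mpr ⟨hxk, hky⟩).2
        have hl1 : f1 k ≤ f1 x := hmono1 hx1 hxk
        have hl2 : f2 k ≤ f2 x := hmono2 hx1 hxk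
        omega
      rcases Nat.even_or_odd (f1 x) with hf1even | hf1odd
      · -- case A : f1 even, f2 odd on the run
        have hf2odd : Odd (f2 x) := by
          rcases hf1even with ⟨t, ht⟩
          rw [Nat.odd_iff]
          omega
        have hxichar : ∀ k, x ≤ k → k ≤ y →
            (xi f1 f2 k = 0 ↔ ((k % 2 = 1 → x < k) ∧ (k % 2 = 0 → k < y))) := by
          intro k hxk hky
          obtain ⟨he1, he2⟩ := hconst k hxk hky
          have hk1 : 1 ≤ k := by omega
          have hPk : Even (f1 k) ∧ Odd (f2 k) := ⟨he1 ▸ hf1even, he2 ▸ hf2odd⟩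
          have hFk : f1 k + f2 k = v := ((hiff' k).mpr ⟨hxk, hky⟩).2
          rcases Nat.even_or_odd k with he | ho
          · have hk2 : k % 2 = 0 := Nat.even_iff.mp he
            rw [hxiE hk1 he]
            by_cases hc : f1 (k+1) + f2 (k+1) = v
            · have hky1 : k + 1 ≤ y := ((hiff' (k+1)).mp ⟨by omega, hc⟩).2
              rw [if_neg (by rintro ⟨_, _, h⟩; exact h (by omega))]
              constructor
              · intro _
                exact ⟨fun h => by omega, fun _ => by omega⟩
              · intro _
                rfl
            · rw [if_pos ⟨hPk.1, hPk.2, by omega⟩]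
              constructor
              · intro h
                exact absurd h (by norm_num)
              · rintro ⟨_, h0⟩
                exfalso
                have hky' := h0 hk2
                exact hc ((hiff' (k+1)).mpr ⟨by omega, by omega⟩).2
          · have hk2 : k % 2 = 1 := Nat.odd_iff.mp ho
            rw [hxiO hk1 ho]
            by_cases hc : x < k
            · have hkc : f1 (k-1) + f2 (k-1) = v := ((hiff' (k-1)).mpr ⟨by omega, by omega⟩).2
              rw [if_neg (by
                rintro ⟨_, _, hcc⟩
                rcases hcc with h | h
                · omega
                · exact h (by omega))]
              constructor
              · intro _
                exact ⟨fun _ => hc, fun h => by omega⟩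
              · intro _
                rfl
            · have hkx : k = x := by omega
              rw [if_pos ⟨hPk.1, hPk.2, by
                rcases hxstart with h | h
                · exact Or.inl (by omega)
                · exact Or.inr (by rw [hkx]; omega)⟩]
              constructor
              · intro h
                exact absurd h (by norm_num)
              · rintro ⟨h1, _⟩
                have := h1 hk2
                omega
        set x' := if x % 2 = 1 then x + 1 else x with hx'def
        set y' := if y % 2 = 0 then y - 1 else y with hy'def
        have hEIcc : {j : ℕ | 1 ≤ j ∧ f1 j + f2 j = v ∧ xi f1 f2 j = 0}
            = Set.Icc x' y' := by
          ext k
          simp only [Set.mem_setOf_eq, Set.mem_Icc]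
          constructor
          · rintro ⟨hk1, hFk, hxik⟩
            have hrange := (hiff' k).mp ⟨hk1, hFk⟩
            have hch := (hxichar k hrange.1 hrange.2).mp hxik
            rw [hx'def, hy'def]
            obtain ⟨hc1, hc2⟩ := hch
            obtain ⟨hr1, hr2⟩ := hrange
            split_ifs <;> omega
          · intro hk
            rw [hx'def, hy'def] at hk
            have hrange : x ≤ k ∧ k ≤ y := by
              split_ifs at hk <;> omega
            obtain ⟨hxk, hky⟩ := hrange
            have hm := (hiff' k).mpr ⟨hxk, hky⟩
            refine ⟨hm.1, hm.2, ?_⟩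
            rw [hxichar k hxk hky]
            constructor
            · intro hp
              split_ifs at hk <;> omega
            · intro hp
              split_ifs at hk <;> omega
        rw [hEIcc, ncard_Icc_nat, hx'def, hy'def, Nat.even_iff]
        split_ifs <;> omega
      · -- case B : f1 odd, f2 even on the run
        have hf2even : f2 x % 2 = 0 := by
          rcases hf1odd with ⟨t, ht⟩
          omega
        have hxizero : ∀ k, x ≤ k → k ≤ y → xi f1 f2 k = 0 := by
          intro k hxk hky
          obtain ⟨he1, he2⟩ := hconst k hxk hky
          apply xi_notP_eq
          rintro ⟨_, hE, _⟩
          rw [he1, Nat.even_iff] at hE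
          rcases hf1odd with ⟨t, ht⟩
          omega
        have hEIcc : {j : ℕ | 1 ≤ j ∧ f1 j + f2 j = v ∧ xi f1 f2 j = 0}
            = Set.Icc x y := by
          ext k
          simp only [Set.mem_setOf_eq, Set.mem_Icc]
          constructor
          · rintro ⟨hk1, hFk, _⟩
            exact (hiff' k).mp ⟨hk1, hFk⟩
          · intro hk
            have hm := (hiff' k).mpr hk
            exact ⟨hm.1, hm.2, hxizero k hk.1 hk.2⟩
        rw [hEIcc, ncard_Icc_nat]
        have hw1pos : 1 ≤ f1 x := by
          rcases hf1odd with ⟨t, ht⟩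
          omega
        obtain ⟨x1, y1, hx11, hx1y1, hiff1, hmult1, hstart1, hfx1⟩ :=
          value_run hmono1 hM1 hw1pos hx1 rfl
        have hx1odd : Odd x1 :=
          align_odd hmono1 hM1 h1s h1sp x1 hx11 (by rw [hfx1]; exact hf1odd) hstart1
        have hmult1even : Even (mult f1 (f1 x)) := h1s _ hf1odd
        have hy1even : y1 % 2 = 0 := by
          rw [hmult1, Nat.even_iff] at hmult1even
          rw [Nat.odd_iff] at hx1odd
          omega
        have hx1x : x1 ≤ x := ((hiff1 x).mp ⟨hx1, rfl⟩).1
        have hf1y : f1 y = f1 x := (hconst y hxy le_rfl).1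
        have hyy1 : y ≤ y1 := ((hiff1 y).mp ⟨by omega, hf1y⟩).2
        rw [Nat.odd_iff] at hx1odd
        by_cases hw2 : f2 x = 0
        · -- f2 vanishes on the run : y = y1 and x = max x1 x2
          have hy1y : y1 ≤ y := by
            have hf1y1 : f1 y1 = f1 x := ((hiff1 y1).mpr ⟨hx1y1, le_rfl⟩).2
            have hf2y1 : f2 y1 = 0 := by
              have h' := hmono2 hx1 (le_trans hxy hyy1)
              omega
            have hFy1 : f1 y1 + f2 y1 = v := by omega
            exact ((hiff' y1).mp ⟨by omega, hFy1⟩).2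
          have hne2 : ({j : ℕ | 1 ≤ j ∧ f2 j = 0} : Set ℕ).Nonempty :=
            ⟨M+1, by omega, hM2 _ (by omega)⟩
          set x2 := sInf {j : ℕ | 1 ≤ j ∧ f2 j = 0} with hx2def
          have hx2mem : x2 ∈ {j : ℕ | 1 ≤ j ∧ f2 j = 0} := Nat.sInf_mem hne2
          have hx2start : x2 = 1 ∨ f2 (x2-1) ≠ f2 x2 := by
            by_cases h' : x2 = 1
            · exact Or.inl h'
            · refine Or.inr ?_
              intro heq
              have hx21 : 1 ≤ x2 := hx2mem.1
              have hmem : x2 - 1 ∈ {j : ℕ | 1 ≤ j ∧ f2 j = 0} :=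
                ⟨by omega, by rw [heq]; exact hx2mem.2⟩
              have := Nat.sInf_le hmem
              omega
          have hx2odd : Odd x2 :=
            align_even hmono2 hM2 h2o h2sp x2 hx2mem.1
              (by rw [hx2mem.2]; exact Even.zero) hx2start
          rw [Nat.odd_iff] at hx2odd
          have hx2x : x2 ≤ x := Nat.sInf_le ⟨hx1, hw2⟩
          have hxmax : x ≤ max x1 x2 := by
            have hmxx : max x1 x2 ≤ x := max_le hx1x hx2x
            have hf1mx : f1 (max x1 x2) = f1 x :=
              ((hiff1 _).mpr ⟨le_max_left _ _, le_trans hmxx (le_trans hxy hyy1)⟩).2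
            have hf2mx : f2 (max x1 x2) = 0 := by
              have h' := hmono2 hx2mem.1 (le_max_right x1 x2)
              have h'' := hx2mem.2
              omega
            have hFmx : f1 (max x1 x2) + f2 (max x1 x2) = v := by omega
            exact ((hiff' _).mp ⟨by omega, hFmx⟩).1
          have hxeq : x = max x1 x2 := le_antisymm hxmax (max_le hx1x hx2x)
          have hyeq : y = y1 := le_antisymm hyy1 hy1y
          rw [Nat.even_iff]
          omega
        · -- f2 positive on the run
          have hw2pos : 1 ≤ f2 x := by omega
          obtain ⟨x2, y2, hx21, hx2y2, hiff2, hmult2, hstart2, hfx2⟩ :=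
            value_run hmono2 hM2 hw2pos hx1 rfl
          have hx2odd : Odd x2 :=
            align_even hmono2 hM2 h2o h2sp x2 hx21
              (by rw [hfx2, Nat.even_iff]; exact hf2even) hstart2
          rw [Nat.odd_iff] at hx2odd
          have hmult2even : Even (mult f2 (f2 x)) :=
            h2o _ (Nat.even_iff.mpr hf2even) hw2pos
          have hy2even : y2 % 2 = 0 := by
            rw [hmult2, Nat.even_iff] at hmult2even
            omega
          have hx2x : x2 ≤ x := ((hiff2 x).mp ⟨hx1, rfl⟩).1
          have hf2y : f2 y = f2 x := (hconst y hxy le_rfl).2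
          have hyy2 : y ≤ y2 := ((hiff2 y).mp ⟨by omega, hf2y⟩).2
          have hxmax : x ≤ max x1 x2 := by
            have hmxx : max x1 x2 ≤ x := max_le hx1x hx2x
            have hf1mx : f1 (max x1 x2) = f1 x :=
              ((hiff1 _).mpr ⟨le_max_left _ _, le_trans hmxx (le_trans hxy hyy1)⟩).2
            have hf2mx : f2 (max x1 x2) = f2 x :=
              ((hiff2 _).mpr ⟨le_max_right _ _, le_trans hmxx (le_trans hxy hyy2)⟩).2
            have hFmx : f1 (max x1 x2) + f2 (max x1 x2) = v := by omega
            exact ((hiff' _).mp ⟨by omega, hFmx⟩).1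
          have hymin : min y1 y2 ≤ y := by
            have hymn : y ≤ min y1 y2 := le_min hyy1 hyy2
            have hf1my : f1 (min y1 y2) = f1 x :=
              ((hiff1 _).mpr ⟨by omega, min_le_left _ _⟩).2
            have hf2my : f2 (min y1 y2) = f2 x :=
              ((hiff2 _).mpr ⟨by omega, min_le_right _ _⟩).2
            have hFmy : f1 (min y1 y2) + f2 (min y1 y2) = v := by omega
            exact ((hiff' _).mp ⟨by omega, hFmy⟩).2
          have hxeq : x = max x1 x2 := le_antisymm hxmax (max_le hx1x hx2x)
          have hyeq : y = min y1 y2 := le_antisymm (le_min hyy1 hyy2) hymin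
          rw [Nat.even_iff]
          omega
  exact ⟨g, hgval, ⟨hmonog, ⟨M, hgtail⟩, htotal⟩, hsympg⟩


end Wald
end

section
/- Let λ be a symplectic partition of 2n. Then λ_{2j−1} ≡ λ_{2j} (mod 2) for every j ≥ 1 (i.e. λ is special) if and only if the transpose ^tλ is a symplectic partition of 2n. -/
open Classical

namespace Wald

section Aux

variable {f : ℕ → ℕ} {N : ℕ}

lemma transpose_eq_card (hpart : IsPartition f N) {m0 : ℕ} (hm0 : ∀ j, m0 < j → f j = 0)
    {j : ℕ} (hj : 1 ≤ j) :
    transpose f j = ((Finset.Icc 1 m0).filter (fun k => j ≤ f k)).card := by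
  have hset : {i : ℕ | 1 ≤ i ∧ 1 ≤ j ∧ j ≤ f i}
      = ↑((Finset.Icc 1 m0).filter (fun k => j ≤ f k)) := by
    ext k
    simp only [Set.mem_setOf_eq, Finset.coe_filter, Finset.mem_Icc, Set.mem_setOf_eq]
    constructor
    · rintro ⟨hk1, _, hkf⟩
      refine ⟨⟨hk1, ?_⟩, hkf⟩
      by_contra h
      have := hm0 k (by omega)
      omega
    · rintro ⟨⟨hk1, _⟩, hkf⟩
      exact ⟨hk1, hj, hkf⟩
  rw [transpose, hset, Set.ncard_coe_finset]

lemma le_transpose_iff (hpart : IsPartition f N) {i j : ℕ} (hi : 1 ≤ i) (hj : 1 ≤ j) :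
    i ≤ transpose f j ↔ j ≤ f i := by
  obtain ⟨m0, hm0⟩ := hpart.fin
  rw [transpose_eq_card hpart hm0 hj]
  constructor
  · intro h
    by_contra hfi
    push_neg at hfi
    have hsub : (Finset.Icc 1 m0).filter (fun k => j ≤ f k) ⊆ Finset.Ico 1 i := by
      intro k hk
      simp only [Finset.mem_filter, Finset.mem_Icc] at hk
      simp only [Finset.mem_Ico]
      refine ⟨hk.1.1, ?_⟩
      by_contra hki
      have := hpart.mono hi (by omega : i ≤ k)
      omega
    have := Finset.card_le_card hsub
    rw [Nat.card_Ico] at this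
    omega
  · intro h
    have hsub : Finset.Icc 1 i ⊆ (Finset.Icc 1 m0).filter (fun k => j ≤ f k) := by
      intro k hk
      simp only [Finset.mem_Icc] at hk
      have hfk : j ≤ f k := le_trans h (hpart.mono hk.1 hk.2)
      simp only [Finset.mem_filter, Finset.mem_Icc]
      refine ⟨⟨hk.1, ?_⟩, hfk⟩
      by_contra hkm
      have := hm0 k (by omega)
      omega
    have := Finset.card_le_card hsub
    rw [Nat.card_Icc] at this
    omega

lemma mult_transpose (hpart : IsPartition f N) {i : ℕ} (hi : 1 ≤ i) :
    mult (transpose f) i = f i - f (i + 1) := by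
  have hset : {j : ℕ | 1 ≤ j ∧ transpose f j = i} = Set.Ioc (f (i + 1)) (f i) := by
    ext j
    simp only [Set.mem_setOf_eq, Set.mem_Ioc]
    constructor
    · rintro ⟨hj, ht⟩
      have h1 := (le_transpose_iff hpart hi hj).mp (by omega)
      have h2 : ¬ (i + 1 ≤ transpose f j) := by omega
      rw [le_transpose_iff hpart (by omega) hj] at h2
      omega
    · rintro ⟨h1, h2⟩
      have hj : 1 ≤ j := by omega
      have ha := (le_transpose_iff hpart hi hj).mpr h2
      have hb : ¬ (i + 1 ≤ transpose f j) := by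
        rw [le_transpose_iff hpart (by omega) hj]; omega
      exact ⟨hj, by omega⟩
  rw [mult, hset,
    show Set.Ioc (f (i + 1)) (f i) = ↑(Finset.Ioc (f (i + 1)) (f i)) by simp,
    Set.ncard_coe_finset, Nat.card_Ioc]

lemma isPartition_transpose (hpart : IsPartition f N) : IsPartition (transpose f) N := by
  obtain ⟨m0, hm0⟩ := hpart.fin
  constructor
  · intro j k hj hjk
    rw [transpose_eq_card hpart hm0 hj, transpose_eq_card hpart hm0 (le_trans hj hjk)]
    apply Finset.card_le_card
    intro x hx
    simp only [Finset.mem_filter] at hx ⊢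
    exact ⟨hx.1, le_trans hjk hx.2⟩
  · refine ⟨f 1, fun j hj => ?_⟩
    rw [transpose_eq_card hpart hm0 (by omega)]
    rw [Finset.card_eq_zero, Finset.filter_eq_empty_iff]
    intro k hk
    simp only [Finset.mem_Icc] at hk
    have := hpart.mono le_rfl hk.1
    omega
  · intro m hm
    have hf1m : f 1 ≤ m := by
      by_contra h
      have h1 : (1 : ℕ) ≤ transpose f (m + 1) :=
        (le_transpose_iff hpart le_rfl (by omega)).mpr (by omega)
      have := hm (m + 1) (by omega)
      omega
    have hstep : ∀ j ∈ Finset.Icc 1 m, transpose f j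
        = ∑ k ∈ Finset.Icc 1 m0, if j ≤ f k then 1 else 0 := by
      intro j hj
      simp only [Finset.mem_Icc] at hj
      rw [transpose_eq_card hpart hm0 hj.1, Finset.card_filter]
    rw [S, Finset.sum_congr rfl hstep, Finset.sum_comm]
    have hstep2 : ∀ k ∈ Finset.Icc 1 m0,
        (∑ j ∈ Finset.Icc 1 m, if j ≤ f k then (1 : ℕ) else 0) = f k := by
      intro k hk
      simp only [Finset.mem_Icc] at hk
      rw [← Finset.card_filter]
      have hfilter : (Finset.Icc 1 m).filter (fun j => j ≤ f k) = Finset.Icc 1 (f k) := by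
        ext j
        simp only [Finset.mem_filter, Finset.mem_Icc]
        have hfk : f k ≤ m := le_trans (hpart.mono le_rfl hk.1) hf1m
        omega
      rw [hfilter, Nat.card_Icc]
      omega
    rw [Finset.sum_congr rfl hstep2]
    simpa [S] using hpart.total m0 hm0

end Aux

/-- A symplectic partition of `2n` is special iff its transpose is symplectic. -/
theorem stmt8 (n : ℕ) (f : ℕ → ℕ) (hpart : IsPartition f (2*n)) (hsymp : Symp f) :
    SpecialPairs f ↔ (IsPartition (transpose f) (2*n) ∧ Symp (transpose f)) := by
  have key : SpecialPairs f ↔ Symp (transpose f) := by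
    constructor
    · intro hsp i hodd
      obtain ⟨k, hk⟩ := hodd
      have hi : 1 ≤ i := by omega
      rw [mult_transpose hpart hi]
      have hle : f (i + 1) ≤ f i := hpart.mono hi (by omega)
      have hthis := hsp (k + 1) (by omega)
      have h1 : 2 * (k + 1) - 1 = i := by omega
      have h2 : 2 * (k + 1) = i + 1 := by omega
      rw [h1, h2] at hthis
      rw [Nat.even_sub hle, Nat.even_iff, Nat.even_iff]
      omega
    · intro hs j hj
      have hodd : Odd (2 * j - 1) := ⟨j - 1, by omega⟩
      have hthis := hs _ hodd
      rw [mult_transpose hpart (by omega)] at hthis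
      have hle : f (2 * j - 1 + 1) ≤ f (2 * j - 1) := hpart.mono (by omega) (by omega)
      have h2 : 2 * j - 1 + 1 = 2 * j := by omega
      rw [h2] at hthis hle
      rw [Nat.even_sub hle, Nat.even_iff, Nat.even_iff] at hthis
      omega
  exact ⟨fun hsp => ⟨isPartition_transpose hpart, key.mp hsp⟩, fun ⟨_, hs⟩ => key.mpr hs⟩

end Wald
end

section
/- Let λ be an orthogonal partition of 2n+1. Then (λ_1 is odd and λ_{2j} ≡ λ_{2j+1} (mod 2) for every j ≥ 1) (i.e. λ is special) if and only if the transpose ^tλ is an orthogonal partition of 2n+1. -/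
open Classical

namespace Wald

section AuxStmt9

variable {f : ℕ → ℕ} {N : ℕ}

lemma transpose_eq_card_s9 {K : ℕ} (hK : ∀ j, K < j → f j = 0) {j : ℕ} (hj : 1 ≤ j) :
    transpose f j = (Finset.filter (fun i => j ≤ f i) (Finset.Icc 1 K)).card := by
  have hset : {i : ℕ | 1 ≤ i ∧ 1 ≤ j ∧ j ≤ f i} =
      ↑(Finset.filter (fun i => j ≤ f i) (Finset.Icc 1 K)) := by
    ext i
    simp only [Finset.coe_filter, Finset.mem_Icc, Set.mem_setOf_eq]
    constructor
    · rintro ⟨h1, _, h3⟩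
      refine ⟨⟨h1, ?_⟩, h3⟩
      by_contra h
      have := hK i (by omega)
      omega
    · rintro ⟨⟨h1, _⟩, h3⟩
      exact ⟨h1, hj, h3⟩
  rw [transpose, hset, Set.ncard_coe_finset]

lemma even_mult_transpose_iff (hpart : IsPartition f N) {i : ℕ} (hi : 1 ≤ i) :
    Even (mult (transpose f) i) ↔ f i % 2 = f (i+1) % 2 := by
  rw [mult_transpose hpart hi]
  have hle : f (i+1) ≤ f i := hpart.mono hi (by omega)
  constructor
  · rintro ⟨r, hr⟩; omega
  · intro h; exact ⟨(f i - f (i+1))/2, by omega⟩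

lemma S_parity (hsp : ∀ j, 1 ≤ j → f (2*j) % 2 = f (2*j+1) % 2) (k : ℕ) :
    S f (2*k+1) % 2 = f 1 % 2 := by
  induction k with
  | zero => simp [S]
  | succ k ih =>
    have hrw : S f (2*(k+1)+1) = S f (2*k+1) + f (2*k+1+1) + f (2*k+1+1+1) := by
      unfold S
      rw [show 2*(k+1)+1 = (2*k+1+1)+1 by ring, Finset.sum_Icc_succ_top (by omega),
        Finset.sum_Icc_succ_top (by omega)]
    have hp := hsp (k+1) (by omega)
    rw [show 2*(k+1) = 2*k+1+1 by ring] at hp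
    rw [hrw]
    omega

end AuxStmt9

/-- An orthogonal partition of `2n+1` is special iff its transpose is orthogonal. -/
theorem stmt9 (n : ℕ) (f : ℕ → ℕ) (hpart : IsPartition f (2*n+1)) (horth : Orth f) :
    SpecialOrthOdd f ↔ (IsPartition (transpose f) (2*n+1) ∧ Orth (transpose f)) := by
  constructor
  · rintro ⟨hodd, hpairs⟩
    refine ⟨isPartition_transpose hpart, ?_⟩
    intro i hie hi1
    obtain ⟨j, hj⟩ := hie
    have hj1 : 1 ≤ j := by omega
    rw [even_mult_transpose_iff hpart hi1, show i = 2*j by omega]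
    exact hpairs j hj1
  · rintro ⟨htr, horthtr⟩
    have hpairs : ∀ j, 1 ≤ j → f (2*j) % 2 = f (2*j+1) % 2 := by
      intro j hj
      have h := horthtr (2*j) ⟨j, by ring⟩ (by omega)
      rwa [even_mult_transpose_iff hpart (by omega)] at h
    refine ⟨?_, hpairs⟩
    obtain ⟨K, hK⟩ := hpart.fin
    have htot := hpart.total (2*K+1) (fun j hj => hK j (by omega))
    have hpar := S_parity hpairs K
    rw [htot] at hpar
    rw [Nat.odd_iff]
    omega

end Wald
end
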